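/- arXiv:2010.11402 — 4 statements merged into one kernel-verified Lean document; each statement's English description precedes it below -/
import Mathlib

section
/- Let d ≥ 1, 0 < γ₀ < 1, τ₀ > d − 1, and let ω₀ ∈ ℝ^d satisfy |⟨k,ω₀⟩| ≥ γ₀/|k|₁^{τ₀} for every nonzero k ∈ ℤ^d. Let s > 0, M > 0, and let (a_k)_{k ∈ ℤ^d∖{0}} be complex numbers with |a_k| ≤ M e^{−s|k|₁} for all k ≠ 0. Then there is a constant C > 0 depending only on d and τ₀ such that for every 0 < σ < s: (i) the series u(z) = −∑_{k≠0} a_k (i⟨k,ω₀⟩)^{−1} e^{i⟨k,z⟩} converges absolutely and uniformly on the closed strip {z ∈ ℂ^d : |Im z_j| ≤ s − σ for all j}, and |u(z)| ≤ C M γ₀^{−1} σ^{−(τ₀+d)} there; (ii) for every x ∈ ℝ^d one has ∑_{j=1}^d ω₀_j ∂_{x_j} u(x) = −∑_{k≠0} a_k e^{i⟨k,x⟩}, both series converging absolutely. -/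
open scoped BigOperators

/-- The `k`-th term of the series defining the solution `u` of the homological equation
`ω₀ · ∂ₓ u = -(g - ĝ(0))`, where `a k` plays the role of the Fourier coefficient `ĝ(k)`. -/
noncomputable def homTerm (d : ℕ) (ω₀ : Fin d → ℝ) (a : (Fin d → ℤ) → ℂ)
    (k : Fin d → ℤ) (z : Fin d → ℂ) : ℂ :=
  a k / (Complex.I * ∑ i, (k i : ℂ) * (ω₀ i : ℂ)) *
    Complex.exp (Complex.I * ∑ i, (k i : ℂ) * z i)



lemma aux_rpow_le (p x : ℝ) (hp : 0 < p) (hx : 0 < x) :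
    x ^ p ≤ (p / Real.exp 1) ^ p * Real.exp x := by
  have hpe : 0 < p / Real.exp 1 := div_pos hp (Real.exp_pos 1)
  rw [Real.rpow_def_of_pos hx, Real.rpow_def_of_pos hpe, ← Real.exp_add, Real.exp_le_exp]
  have hlog : Real.log (x / p) ≤ x / p - 1 := Real.log_le_sub_one_of_pos (div_pos hx hp)
  rw [Real.log_div hx.ne' hp.ne'] at hlog
  have h2 : p * (Real.log x - Real.log p) ≤ p * (x / p - 1) :=
    mul_le_mul_of_nonneg_left hlog hp.le
  have h3 : p * (x / p - 1) = x - p := by field_simp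
  rw [Real.log_div hp.ne' (Real.exp_pos 1).ne', Real.log_exp]
  nlinarith [h2, h3]

lemma aux_poly_exp (p σ t : ℝ) (hp : 0 < p) (hσ : 0 < σ) (ht : 0 < t) :
    t ^ p * Real.exp (-(σ / 2) * t) ≤ (2 * p / Real.exp 1) ^ p * σ ^ (-p) := by
  have hx : 0 < σ * t / 2 := by positivity
  have h1 := aux_rpow_le p (σ * t / 2) hp hx
  have ht' : t = (2 / σ) * (σ * t / 2) := by field_simp
  have h2 : t ^ p = (2 / σ) ^ p * (σ * t / 2) ^ p := by
    rw [ht']; rw [Real.mul_rpow (by positivity) (by positivity)]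
    congr 1 <;> rw [← ht']
  have h3 : t ^ p ≤ (2 / σ) ^ p * ((p / Real.exp 1) ^ p * Real.exp (σ * t / 2)) := by
    rw [h2]; exact mul_le_mul_of_nonneg_left h1 (by positivity)
  have h4 : (2 / σ) ^ p * (p / Real.exp 1) ^ p = (2 * p / Real.exp 1) ^ p * σ ^ (-p) := by
    rw [← Real.mul_rpow (by positivity) (by positivity),
      show 2 / σ * (p / Real.exp 1) = 2 * p / Real.exp 1 * σ⁻¹ by field_simp,
      Real.mul_rpow (by positivity) (by positivity), Real.inv_rpow hσ.le,
      ← Real.rpow_neg hσ.le]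
  have h5 : Real.exp (-(σ / 2) * t) = (Real.exp (σ * t / 2))⁻¹ := by
    rw [← Real.exp_neg]; ring_nf
  calc t ^ p * Real.exp (-(σ / 2) * t)
      ≤ (2 / σ) ^ p * ((p / Real.exp 1) ^ p * Real.exp (σ * t / 2)) * Real.exp (-(σ / 2) * t) :=
        mul_le_mul_of_nonneg_right h3 (Real.exp_pos _).le
    _ = (2 / σ) ^ p * (p / Real.exp 1) ^ p := by
        rw [h5]; field_simp
    _ = (2 * p / Real.exp 1) ^ p * σ ^ (-p) := h4

lemma aux_geom (σ : ℝ) (hσ : 0 < σ) (I : Finset ℕ) (hI : ∀ n ∈ I, 1 ≤ n) :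
    ∑ n ∈ I, Real.exp (-(σ / 2) * n) ≤ 2 / σ := by
  set r := Real.exp (-(σ / 2)) with hr
  have hr0 : 0 < r := Real.exp_pos _
  have hr1 : r < 1 := Real.exp_lt_one_iff.mpr (by linarith)
  have hterm : ∀ n : ℕ, Real.exp (-(σ / 2) * n) = r ^ n := by
    intro n
    rw [hr, ← Real.exp_nat_mul]
    ring_nf
  have hinj : ∀ x ∈ I, ∀ y ∈ I, x - 1 = y - 1 → x = y := by
    intro x hx y hy h
    have := hI x hx; have := hI y hy; omega
  have h1 : ∑ n ∈ I, Real.exp (-(σ / 2) * n) = ∑ m ∈ I.image (· - 1), r ^ (m + 1) := by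
    rw [Finset.sum_image hinj]
    refine Finset.sum_congr rfl fun n hn => ?_
    rw [hterm]
    congr 1
    have := hI n hn; omega
  rw [h1]
  have h2 : ∑ m ∈ I.image (· - 1), r ^ (m + 1) = r * ∑ m ∈ I.image (· - 1), r ^ m := by
    rw [Finset.mul_sum]; refine Finset.sum_congr rfl fun m _ => by ring
  rw [h2]
  have hsum : Summable fun m : ℕ => r ^ m := summable_geometric_of_lt_one hr0.le hr1
  have h3 : ∑ m ∈ I.image (· - 1), r ^ m ≤ ∑' m : ℕ, r ^ m :=
    Summable.sum_le_tsum _ (fun m _ => by positivity) hsum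
  have h4 : ∑' m : ℕ, r ^ m = (1 - r)⁻¹ := tsum_geometric_of_lt_one hr0.le hr1
  have hE : σ / 2 + 1 ≤ Real.exp (σ / 2) := by
    have := Real.add_one_le_exp (σ / 2); linarith
  have hrE : r = (Real.exp (σ / 2))⁻¹ := by rw [hr, ← Real.exp_neg]
  have hEpos : (0:ℝ) < Real.exp (σ / 2) := Real.exp_pos _
  have h5 : r * (1 - r)⁻¹ ≤ 2 / σ := by
    rw [hrE]
    have hE1 : (1:ℝ) < Real.exp (σ / 2) := by nlinarith
    have hne : (1:ℝ) - (Real.exp (σ / 2))⁻¹ ≠ 0 := by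
      have : (Real.exp (σ / 2))⁻¹ < 1 := by
        rw [inv_lt_one_iff₀]; right; exact hE1
      linarith
    have heq : (Real.exp (σ / 2))⁻¹ * (1 - (Real.exp (σ / 2))⁻¹)⁻¹
        = (Real.exp (σ / 2) - 1)⁻¹ := by
      rw [← one_div, ← one_div, ← one_div]
      rw [div_mul_div_comm]
      congr 1 <;> field_simp
    rw [heq, show (2:ℝ) / σ = (σ / 2)⁻¹ by rw [inv_div]]
    have h7 : σ / 2 ≤ Real.exp (σ / 2) - 1 := by linarith
    exact inv_anti₀ (by linarith) h7
  calc r * ∑ m ∈ I.image (· - 1), r ^ m ≤ r * (1 - r)⁻¹ := by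
        rw [← h4]; exact mul_le_mul_of_nonneg_left h3 hr0.le
    _ ≤ 2 / σ := h5

lemma aux_wn_pos {d : ℕ} (k : Fin d → ℤ) (hk : k ≠ 0) : 1 ≤ ∑ i, (k i).natAbs := by
  by_contra h
  push_neg at h
  apply hk
  funext i
  have h0 : ∑ i, (k i).natAbs = 0 := by omega
  have := Finset.sum_eq_zero_iff.mp h0 i (Finset.mem_univ i)
  simpa [Int.natAbs_eq_zero] using this

lemma aux_card (d n : ℕ) (hd : 1 ≤ d) (F : Finset {k : Fin d → ℤ // k ≠ 0}) :
    (F.filter fun k => (∑ i, (k.1 i).natAbs) = n).card ≤ 2 * (2 * n + 1) ^ (d - 1) := by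
  classical
  have i₀ : Fin d := ⟨0, hd⟩
  set T : Finset ((Fin d → ℤ) × Bool) :=
    (Fintype.piFinset fun i : Fin d =>
      if i = i₀ then ({0} : Finset ℤ) else Finset.Icc (-(n : ℤ)) n) ×ˢ Finset.univ with hT
  have hcard : T.card = (2 * n + 1) ^ (d - 1) * 2 := by
    rw [hT, Finset.card_product, Fintype.card_piFinset]
    have : ∀ i : Fin d, ((if i = i₀ then ({0} : Finset ℤ) else Finset.Icc (-(n : ℤ)) n)).card
        = if i = i₀ then 1 else 2 * n + 1 := by
      intro i
      split
      · simp
      · rw [Int.card_Icc]; omega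
    rw [Finset.prod_congr rfl fun i _ => this i]
    have hcu : ((Finset.univ : Finset (Fin d)).erase i₀).card = d - 1 := by
      rw [Finset.card_erase_of_mem (Finset.mem_univ _), Finset.card_univ, Fintype.card_fin]
    have hprod : (∏ i : Fin d, if i = i₀ then 1 else 2 * n + 1) = (2 * n + 1) ^ (d - 1) := by
      rw [← Finset.mul_prod_erase Finset.univ _ (Finset.mem_univ i₀), if_pos rfl, one_mul,
        Finset.prod_congr rfl (fun i hi => if_neg (Finset.ne_of_mem_erase hi)),
        Finset.prod_const, hcu]
    rw [hprod, Finset.card_univ, Fintype.card_bool]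
  rw [show 2 * (2 * n + 1) ^ (d - 1) = (2 * n + 1) ^ (d - 1) * 2 by ring, ← hcard]
  apply Finset.card_le_card_of_injOn
    (fun k => (fun i => if i = i₀ then 0 else k.1 i, decide (0 ≤ k.1 i₀)))
  · intro k hk
    rw [Finset.mem_coe, Finset.mem_filter] at hk
    obtain ⟨-, hkn⟩ := hk
    rw [hT, Finset.mem_coe, Finset.mem_product]
    constructor
    · rw [Fintype.mem_piFinset]
      intro i
      by_cases hi : i = i₀
      · simp [hi]
      · simp only [hi, if_neg, if_false]
        have hle : (k.1 i).natAbs ≤ n := by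
          rw [← hkn]
          exact Finset.single_le_sum (f := fun j => (k.1 j).natAbs) (fun j _ => Nat.zero_le _) (Finset.mem_univ i)
        rw [Finset.mem_Icc]
        omega
    · exact Finset.mem_univ _
  · intro k hk k' hk' heq
    rw [Finset.mem_coe, Finset.mem_filter] at hk hk'
    obtain ⟨-, hkn⟩ := hk
    obtain ⟨-, hkn'⟩ := hk'
    simp only [Prod.mk.injEq] at heq
    obtain ⟨hfun, hsign⟩ := heq
    have hoff : ∀ i, i ≠ i₀ → k.1 i = k'.1 i := by
      intro i hi
      have := congrFun hfun i
      simpa [hi] using this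
    have hsum : (k.1 i₀).natAbs + ∑ i ∈ Finset.univ.erase i₀, (k.1 i).natAbs
        = (k'.1 i₀).natAbs + ∑ i ∈ Finset.univ.erase i₀, (k'.1 i).natAbs := by
      rw [Finset.add_sum_erase _ (fun i => (k.1 i).natAbs) (Finset.mem_univ i₀),
        Finset.add_sum_erase _ (fun i => (k'.1 i).natAbs) (Finset.mem_univ i₀), hkn, hkn']
    have hsums : ∑ i ∈ Finset.univ.erase i₀, (k.1 i).natAbs
        = ∑ i ∈ Finset.univ.erase i₀, (k'.1 i).natAbs :=
      Finset.sum_congr rfl fun i hi => by rw [hoff i (Finset.ne_of_mem_erase hi)]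
    have habs : (k.1 i₀).natAbs = (k'.1 i₀).natAbs := by omega
    have hsgn : (0 ≤ k.1 i₀) ↔ (0 ≤ k'.1 i₀) := by
      constructor <;> intro h <;> [exact of_decide_eq_true (hsign ▸ decide_eq_true h);
        exact of_decide_eq_true (hsign.symm ▸ decide_eq_true h)]
    have h0 : k.1 i₀ = k'.1 i₀ := by
      rcases le_or_gt 0 (k.1 i₀) with h | h
      · have := hsgn.mp h; omega
      · have : ¬ (0 ≤ k'.1 i₀) := fun hh => absurd (hsgn.mpr hh) (not_le.mpr h)
        omega
    apply Subtype.ext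
    funext i
    by_cases hi : i = i₀
    · rw [hi, h0]
    · exact hoff i hi


lemma aux_w_cast {d : ℕ} (k : Fin d → ℤ) :
    (∑ i, |(k i : ℝ)|) = ((∑ i, (k i).natAbs : ℕ) : ℝ) := by
  push_cast [Nat.cast_natAbs]
  rfl

lemma aux_key (d : ℕ) (hd : 1 ≤ d) (τ₀ : ℝ) (hτ : (d : ℝ) - 1 < τ₀) :
    ∃ C₀ : ℝ, 0 < C₀ ∧ ∀ σ : ℝ, 0 < σ →
      ∀ F : Finset {k : Fin d → ℤ // k ≠ 0},
        ∑ k ∈ F, (∑ i, |(k.1 i : ℝ)|) ^ τ₀ * Real.exp (-σ * ∑ i, |(k.1 i : ℝ)|)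
          ≤ C₀ * σ ^ (-(τ₀ + (d : ℝ))) := by
  classical
  have hd1 : (1 : ℝ) ≤ (d : ℝ) := by exact_mod_cast hd
  have hτ0 : 0 < τ₀ := by linarith
  set p : ℝ := τ₀ + (d : ℝ) - 1 with hpdef
  have hp : 0 < p := by simp only [hpdef]; linarith
  have hA : (0 : ℝ) < (2 * p / Real.exp 1) ^ p := Real.rpow_pos_of_pos (by positivity) p
  refine ⟨4 * 3 ^ (d - 1) * (2 * p / Real.exp 1) ^ p, by positivity, fun σ hσ F => ?_⟩
  set wn : {k : Fin d → ℤ // k ≠ 0} → ℕ := fun k => ∑ i, (k.1 i).natAbs with hwn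
  set f : {k : Fin d → ℤ // k ≠ 0} → ℝ :=
    fun k => (∑ i, |(k.1 i : ℝ)|) ^ τ₀ * Real.exp (-σ * ∑ i, |(k.1 i : ℝ)|) with hf
  have hfval : ∀ k, f k = ((wn k : ℝ)) ^ τ₀ * Real.exp (-σ * (wn k : ℝ)) := by
    intro k
    simp only [hf, hwn, aux_w_cast k.1]
  -- fiberwise decomposition
  have h1 : ∑ k ∈ F, f k = ∑ n ∈ F.image wn, ∑ k ∈ F.filter fun k => wn k = n, f k :=
    (Finset.sum_fiberwise_of_maps_to (fun k hk => Finset.mem_image_of_mem wn hk) f).symm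
  have himage : ∀ n ∈ F.image wn, 1 ≤ n := by
    intro n hn
    obtain ⟨k, _, hk⟩ := Finset.mem_image.mp hn
    subst hk
    exact aux_wn_pos k.1 k.2
  have h2 : ∀ n ∈ F.image wn, ∑ k ∈ F.filter (fun k => wn k = n), f k
      ≤ (2 * 3 ^ (d - 1) * (2 * p / Real.exp 1) ^ p * σ ^ (-p)) * Real.exp (-(σ / 2) * n) := by
    intro n hn
    have hn1 : 1 ≤ n := himage n hn
    have hnR : (1 : ℝ) ≤ (n : ℝ) := by exact_mod_cast hn1
    have hnpos : (0 : ℝ) < (n : ℝ) := by linarith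
    have hinner : ∑ k ∈ F.filter (fun k => wn k = n), f k
        = ((F.filter fun k => wn k = n).card : ℝ) * ((n : ℝ) ^ τ₀ * Real.exp (-σ * n)) := by
      rw [Finset.sum_congr rfl (fun k hk => ?_), Finset.sum_const, nsmul_eq_mul]
      rw [hfval k, (Finset.mem_filter.mp hk).2]
    rw [hinner]
    have hcard : ((F.filter fun k => wn k = n).card : ℝ) ≤ 2 * ((2 * n + 1 : ℕ) : ℝ) ^ (d - 1) := by
      have := aux_card d n hd F
      calc ((F.filter fun k => wn k = n).card : ℝ) ≤ ((2 * (2 * n + 1) ^ (d - 1) : ℕ) : ℝ) := by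
            exact_mod_cast this
        _ = 2 * ((2 * n + 1 : ℕ) : ℝ) ^ (d - 1) := by push_cast; ring
    have hterm_pos : (0 : ℝ) ≤ (n : ℝ) ^ τ₀ * Real.exp (-σ * n) := by positivity
    calc ((F.filter fun k => wn k = n).card : ℝ) * ((n : ℝ) ^ τ₀ * Real.exp (-σ * n))
        ≤ (2 * ((2 * n + 1 : ℕ) : ℝ) ^ (d - 1)) * ((n : ℝ) ^ τ₀ * Real.exp (-σ * n)) :=
          mul_le_mul_of_nonneg_right hcard hterm_pos
      _ ≤ (2 * (3 * (n : ℝ)) ^ (d - 1)) * ((n : ℝ) ^ τ₀ * Real.exp (-σ * n)) := by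
          apply mul_le_mul_of_nonneg_right _ hterm_pos
          have : ((2 * n + 1 : ℕ) : ℝ) ≤ 3 * (n : ℝ) := by push_cast; linarith
          exact mul_le_mul_of_nonneg_left
            (pow_le_pow_left₀ (by positivity) this (d - 1)) (by norm_num)
      _ = 2 * 3 ^ (d - 1) * ((n : ℝ) ^ p * Real.exp (-(σ / 2) * n)) * Real.exp (-(σ / 2) * n) := by
          rw [mul_pow]
          have hpow : ((n : ℝ)) ^ (d - 1) * (n : ℝ) ^ τ₀ = (n : ℝ) ^ p := by
            rw [← Real.rpow_natCast (n : ℝ) (d - 1), ← Real.rpow_add hnpos]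
            congr 1
            have : ((d - 1 : ℕ) : ℝ) = (d : ℝ) - 1 := by
              push_cast [Nat.cast_sub hd]; ring
            rw [this, hpdef]; ring
          have hexp : Real.exp (-σ * n) = Real.exp (-(σ / 2) * n) * Real.exp (-(σ / 2) * n) := by
            rw [← Real.exp_add]; ring_nf
          rw [hexp, ← hpow]; ring
      _ ≤ 2 * 3 ^ (d - 1) * ((2 * p / Real.exp 1) ^ p * σ ^ (-p)) * Real.exp (-(σ / 2) * n) := by
          apply mul_le_mul_of_nonneg_right _ (Real.exp_pos _).le
          exact mul_le_mul_of_nonneg_left (aux_poly_exp p σ n hp hσ hnpos) (by positivity)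
      _ = (2 * 3 ^ (d - 1) * (2 * p / Real.exp 1) ^ p * σ ^ (-p)) * Real.exp (-(σ / 2) * n) := by
          ring
  have h3 : ∑ k ∈ F, f k
      ≤ (2 * 3 ^ (d - 1) * (2 * p / Real.exp 1) ^ p * σ ^ (-p)) *
        ∑ n ∈ F.image wn, Real.exp (-(σ / 2) * n) := by
    rw [h1, Finset.mul_sum]
    exact Finset.sum_le_sum h2
  have h4 : (2 * 3 ^ (d - 1) * (2 * p / Real.exp 1) ^ p * σ ^ (-p)) *
        ∑ n ∈ F.image wn, Real.exp (-(σ / 2) * n)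
      ≤ (2 * 3 ^ (d - 1) * (2 * p / Real.exp 1) ^ p * σ ^ (-p)) * (2 / σ) := by
    apply mul_le_mul_of_nonneg_left (aux_geom σ hσ _ himage) (by positivity)
  have h5 : (2 * 3 ^ (d - 1) * (2 * p / Real.exp 1) ^ p * σ ^ (-p)) * (2 / σ)
      = 4 * 3 ^ (d - 1) * (2 * p / Real.exp 1) ^ p * σ ^ (-(τ₀ + (d : ℝ))) := by
    have hσinv : (2 : ℝ) / σ = 2 * σ ^ (-1 : ℝ) := by
      rw [Real.rpow_neg_one]; ring
    rw [hσinv]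
    have hcomb : σ ^ (-p) * σ ^ (-1 : ℝ) = σ ^ (-(τ₀ + (d : ℝ))) := by
      rw [← Real.rpow_add hσ]; congr 1; rw [hpdef]; ring
    calc 2 * 3 ^ (d - 1) * (2 * p / Real.exp 1) ^ p * σ ^ (-p) * (2 * σ ^ (-1 : ℝ))
        = 4 * 3 ^ (d - 1) * (2 * p / Real.exp 1) ^ p * (σ ^ (-p) * σ ^ (-1 : ℝ)) := by ring
      _ = 4 * 3 ^ (d - 1) * (2 * p / Real.exp 1) ^ p * σ ^ (-(τ₀ + (d : ℝ))) := by rw [hcomb]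
  calc ∑ k ∈ F, f k ≤ _ := h3
    _ ≤ _ := h4
    _ = _ := h5


lemma aux_S_real {d : ℕ} (k : Fin d → ℤ) (y : Fin d → ℝ) :
    ∑ i, (k i : ℂ) * (y i : ℂ) = ((∑ i, (k i : ℝ) * y i : ℝ) : ℂ) := by
  push_cast
  rfl

lemma aux_norm_I_mul_real (r : ℝ) : ‖Complex.I * (r : ℂ)‖ = |r| := by
  rw [norm_mul, Complex.norm_I, one_mul, Complex.norm_real, Real.norm_eq_abs]

lemma aux_norm_exp_I_mul_real (r : ℝ) : ‖Complex.exp (Complex.I * (r : ℂ))‖ = 1 := by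
  rw [Complex.norm_exp]
  simp [Complex.mul_re]

lemma aux_norm_exp {d : ℕ} (k : Fin d → ℤ) (z : Fin d → ℂ) :
    ‖Complex.exp (Complex.I * ∑ i, (k i : ℂ) * z i)‖
      = Real.exp (-∑ i, (k i : ℝ) * (z i).im) := by
  rw [Complex.norm_exp]
  congr 1
  rw [Complex.mul_re, Complex.I_re, Complex.I_im, zero_mul, one_mul, zero_sub, neg_inj,
    Complex.im_sum]
  refine Finset.sum_congr rfl fun i _ => ?_
  rw [Complex.mul_im]
  simp

lemma aux_hasDerivAt_term (d : ℕ) (ω₀ : Fin d → ℝ) (a : (Fin d → ℤ) → ℂ) (k : Fin d → ℤ)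
    (hω : (∑ i, (k i : ℝ) * ω₀ i) ≠ 0) (x : Fin d → ℝ) (t : ℝ) :
    HasDerivAt (fun t : ℝ => homTerm d ω₀ a k (fun i => ((x i : ℂ) + (t : ℂ) * (ω₀ i : ℂ))))
      (a k * Complex.exp (Complex.I * ∑ i, (k i : ℂ) * ((x i : ℂ) + (t : ℂ) * (ω₀ i : ℂ)))) t := by
  set A : ℂ := Complex.I * ∑ i, (k i : ℂ) * (x i : ℂ) with hA
  set B : ℂ := Complex.I * ∑ i, (k i : ℂ) * (ω₀ i : ℂ) with hB
  have hBne : B ≠ 0 := by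
    rw [hB, aux_S_real k ω₀]
    exact mul_ne_zero Complex.I_ne_zero (by exact_mod_cast hω)
  have hfun : ∀ t' : ℝ,
      Complex.I * ∑ i, (k i : ℂ) * ((x i : ℂ) + (t' : ℂ) * (ω₀ i : ℂ)) = A + (t' : ℂ) * B := by
    intro t'
    have hsum : ∑ i, (k i : ℂ) * ((x i : ℂ) + (t' : ℂ) * (ω₀ i : ℂ))
        = ∑ i, (k i : ℂ) * (x i : ℂ) + (t' : ℂ) * ∑ i, (k i : ℂ) * (ω₀ i : ℂ) := by
      rw [Finset.mul_sum, ← Finset.sum_add_distrib]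
      exact Finset.sum_congr rfl fun i _ => by ring
    rw [hsum, hA, hB]; ring
  have h1 : HasDerivAt (fun w : ℂ => a k / B * Complex.exp (A + w * B))
      (a k / B * (Complex.exp (A + (t : ℂ) * B) * B)) (t : ℂ) :=
    (((hasDerivAt_mul_const B).const_add A).cexp).const_mul (a k / B)
  have h2 := h1.comp_ofReal
  convert h2 using 1
  · funext t'
    show homTerm d ω₀ a k _ = _
    rw [homTerm, hfun t']
  · rw [hfun t]
    field_simp

lemma aux_norm_homTerm (d : ℕ) (ω₀ : Fin d → ℝ) (a : (Fin d → ℤ) → ℂ) (k : Fin d → ℤ)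
    (hk : k ≠ 0) (γ₀ τ₀ s σ M : ℝ) (hγ : 0 < γ₀) (hM : 0 < M) (hσ : 0 < σ) (hσs : σ < s)
    (hdio : γ₀ / (∑ i, |(k i : ℝ)|) ^ τ₀ ≤ |∑ i, (k i : ℝ) * ω₀ i|)
    (ha : ‖a k‖ ≤ M * Real.exp (-s * ∑ i, |(k i : ℝ)|))
    (z : Fin d → ℂ) (hz : ∀ j, |(z j).im| ≤ s - σ) :
    ‖homTerm d ω₀ a k z‖
      ≤ M / γ₀ * ((∑ i, |(k i : ℝ)|) ^ τ₀ * Real.exp (-σ * ∑ i, |(k i : ℝ)|)) := by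
  set w : ℝ := ∑ i, |(k i : ℝ)| with hw
  have hw1 : (1 : ℝ) ≤ w := by
    have h := aux_wn_pos k hk
    rw [hw, aux_w_cast k]
    exact_mod_cast h
  have hwpos : (0 : ℝ) < w := by linarith
  have hwt : (0 : ℝ) < w ^ τ₀ := Real.rpow_pos_of_pos hwpos τ₀
  have hDpos : (0 : ℝ) < γ₀ / w ^ τ₀ := by positivity
  -- norm of the term
  have hnorm : ‖homTerm d ω₀ a k z‖
      = ‖a k‖ / |∑ i, (k i : ℝ) * ω₀ i| * Real.exp (-∑ i, (k i : ℝ) * (z i).im) := by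
    rw [homTerm, norm_mul, norm_div, aux_norm_exp, aux_S_real k ω₀, aux_norm_I_mul_real]
  rw [hnorm]
  have hExp : Real.exp (-∑ i, (k i : ℝ) * (z i).im) ≤ Real.exp ((s - σ) * w) := by
    rw [Real.exp_le_exp, ← Finset.sum_neg_distrib, hw, Finset.mul_sum]
    refine Finset.sum_le_sum fun i _ => ?_
    have h1 : -((k i : ℝ) * (z i).im) ≤ |(k i : ℝ) * (z i).im| := neg_le_abs _
    have h2 : |(k i : ℝ) * (z i).im| = |(k i : ℝ)| * |(z i).im| := abs_mul _ _
    have h3 : |(k i : ℝ)| * |(z i).im| ≤ |(k i : ℝ)| * (s - σ) :=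
      mul_le_mul_of_nonneg_left (hz i) (abs_nonneg _)
    calc -((k i : ℝ) * (z i).im) ≤ |(k i : ℝ)| * |(z i).im| := by rw [← h2]; exact h1
      _ ≤ |(k i : ℝ)| * (s - σ) := h3
      _ = (s - σ) * |(k i : ℝ)| := by ring
  have hDiv : ‖a k‖ / |∑ i, (k i : ℝ) * ω₀ i|
      ≤ (M * Real.exp (-s * w)) / (γ₀ / w ^ τ₀) :=
    div_le_div₀ (by positivity) ha hDpos hdio
  calc ‖a k‖ / |∑ i, (k i : ℝ) * ω₀ i| * Real.exp (-∑ i, (k i : ℝ) * (z i).im)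
      ≤ (M * Real.exp (-s * w)) / (γ₀ / w ^ τ₀) * Real.exp ((s - σ) * w) :=
        mul_le_mul hDiv hExp (Real.exp_pos _).le (by positivity)
    _ = M / γ₀ * (w ^ τ₀ * (Real.exp (-s * w) * Real.exp ((s - σ) * w))) := by
        rw [div_div_eq_mul_div]
        field_simp
    _ = M / γ₀ * (w ^ τ₀ * Real.exp (-σ * w)) := by
        rw [← Real.exp_add, show -s * w + (s - σ) * w = -σ * w by ring]


/-- Solution of the homological equation with Diophantine frequency
`ω₀ ∈ DC(γ₀, τ₀)`: the series `u(z) = -∑_{k≠0} a_k (i⟨k,ω₀⟩)⁻¹ e^{i⟨k,z⟩}` converges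
absolutely and uniformly on the strip `|Im z_j| ≤ s - σ`, and is bounded there by
`C M γ₀⁻¹ σ^{-(τ₀+d)}` with `C` depending only on `d` and `τ₀`; moreover, on the reals,
`∑_j ω₀_j ∂_{x_j} u(x) = -∑_{k≠0} a_k e^{i⟨k,x⟩}`, both series converging absolutely. -/
theorem stmt_2 (d : ℕ) (hd : 1 ≤ d) (τ₀ : ℝ) (hτ : (d : ℝ) - 1 < τ₀) :
    ∃ C : ℝ, 0 < C ∧
      ∀ γ₀ : ℝ, 0 < γ₀ → γ₀ < 1 →
      ∀ ω₀ : Fin d → ℝ,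
        (∀ k : Fin d → ℤ, k ≠ 0 →
          γ₀ / (∑ i, |(k i : ℝ)|) ^ τ₀ ≤ |∑ i, (k i : ℝ) * ω₀ i|) →
      ∀ s M : ℝ, 0 < s → 0 < M →
      ∀ a : (Fin d → ℤ) → ℂ,
        (∀ k : Fin d → ℤ, k ≠ 0 → ‖a k‖ ≤ M * Real.exp (-s * ∑ i, |(k i : ℝ)|)) →
      ∀ σ : ℝ, 0 < σ → σ < s →
        -- (i) absolute and uniform convergence on the closed strip, with the bound
        ((∃ g : {k : Fin d → ℤ // k ≠ 0} → ℝ, Summable g ∧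
            ∀ (k : {k : Fin d → ℤ // k ≠ 0}) (z : Fin d → ℂ),
              (∀ j, |(z j).im| ≤ s - σ) → ‖homTerm d ω₀ a k.1 z‖ ≤ g k) ∧
          ∀ z : Fin d → ℂ, (∀ j, |(z j).im| ≤ s - σ) →
            Summable (fun k : {k : Fin d → ℤ // k ≠ 0} => ‖homTerm d ω₀ a k.1 z‖) ∧
            ‖-∑' k : {k : Fin d → ℤ // k ≠ 0}, homTerm d ω₀ a k.1 z‖
              ≤ C * M / γ₀ * σ ^ (-(τ₀ + (d : ℝ)))) ∧
        -- (ii) the homological equation holds on the reals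
        (∀ x : Fin d → ℝ,
          Summable (fun k : {k : Fin d → ℤ // k ≠ 0} =>
            ‖a k.1 * Complex.exp (Complex.I * ∑ i, (k.1 i : ℂ) * (x i : ℂ))‖) ∧
          HasDerivAt
            (fun t : ℝ => -∑' k : {k : Fin d → ℤ // k ≠ 0},
              homTerm d ω₀ a k.1 (fun i => ((x i : ℂ) + (t : ℂ) * (ω₀ i : ℂ))))
            (-∑' k : {k : Fin d → ℤ // k ≠ 0},
              a k.1 * Complex.exp (Complex.I * ∑ i, (k.1 i : ℂ) * (x i : ℂ))) 0) := by
  classical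
  obtain ⟨C₀, hC₀, hkey⟩ := aux_key d hd τ₀ hτ
  refine ⟨C₀, hC₀, ?_⟩
  intro γ₀ hγ0 hγ1 ω₀ hdio s M hs hM a ha σ hσ hσs
  set K := {k : Fin d → ℤ // k ≠ 0}
  set w : K → ℝ := fun k => ∑ i, |(k.1 i : ℝ)| with hwdef
  set φ : ℝ → K → ℝ := fun σ' k => (w k) ^ τ₀ * Real.exp (-σ' * w k) with hφdef
  have hφ_nonneg : ∀ σ' : ℝ, (0 : K → ℝ) ≤ φ σ' := by
    intro σ' k
    have hw1 : (1 : ℝ) ≤ w k := by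
      have h := aux_wn_pos k.1 k.2
      rw [hwdef]; simp only; rw [aux_w_cast k.1]; exact_mod_cast h
    have : (0:ℝ) < w k := by linarith
    simp only [hφdef, Pi.zero_apply]
    positivity
  have hφ_summable : ∀ σ' : ℝ, 0 < σ' → Summable (φ σ') := by
    intro σ' hσ'
    exact summable_of_sum_le (hφ_nonneg σ') (hkey σ' hσ')
  have hφ_tsum : ∀ σ' : ℝ, 0 < σ' → ∑' k, φ σ' k ≤ C₀ * σ' ^ (-(τ₀ + (d : ℝ))) := by
    intro σ' hσ'
    exact Summable.tsum_le_of_sum_le (hφ_summable σ' hσ') (hkey σ' hσ')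
  -- uniform bound for the terms on the strip
  have hbound : ∀ (k : K) (z : Fin d → ℂ), (∀ j, |(z j).im| ≤ s - σ) →
      ‖homTerm d ω₀ a k.1 z‖ ≤ M / γ₀ * φ σ k := fun k z hz =>
    aux_norm_homTerm d ω₀ a k.1 k.2 γ₀ τ₀ s σ M hγ0 hM hσ hσs (hdio k.1 k.2) (ha k.1 k.2) z hz
  have hg_summable : Summable (fun k : K => M / γ₀ * φ σ k) := (hφ_summable σ hσ).mul_left _
  have hω_ne : ∀ k : K, (∑ i, (k.1 i : ℝ) * ω₀ i) ≠ 0 := by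
    intro k
    have h := hdio k.1 k.2
    have hw1 : (1 : ℝ) ≤ w k := by
      have h' := aux_wn_pos k.1 k.2
      rw [hwdef]; simp only; rw [aux_w_cast k.1]; exact_mod_cast h'
    have hwt : (0:ℝ) < (∑ i, |(k.1 i : ℝ)|) ^ τ₀ := Real.rpow_pos_of_pos (by
      change (0:ℝ) < w k; linarith) τ₀
    have : (0:ℝ) < |∑ i, (k.1 i : ℝ) * ω₀ i| := lt_of_lt_of_le (by positivity) h
    exact abs_pos.mp this
  -- norm of a_k e^{i<k,x>}
  have hnorm_ax : ∀ (k : K) (y : Fin d → ℝ),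
      ‖a k.1 * Complex.exp (Complex.I * ∑ i, (k.1 i : ℂ) * (y i : ℂ))‖ = ‖a k.1‖ := by
    intro k y
    rw [norm_mul, aux_S_real k.1 y, aux_norm_exp_I_mul_real, mul_one]
  have ha_le : ∀ k : K, ‖a k.1‖ ≤ M * φ (s / 2) k := by
    intro k
    have hw1 : (1 : ℝ) ≤ w k := by
      have h' := aux_wn_pos k.1 k.2
      rw [hwdef]; simp only; rw [aux_w_cast k.1]; exact_mod_cast h'
    have hwpos : (0:ℝ) < w k := by linarith
    have h1 : (1:ℝ) ≤ (w k) ^ τ₀ := Real.one_le_rpow hw1 (by linarith [show (1:ℝ) ≤ (d:ℝ) from by exact_mod_cast hd])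
    have h2 : Real.exp (-s * w k) ≤ Real.exp (-(s / 2) * w k) := by
      rw [Real.exp_le_exp]
      nlinarith
    calc ‖a k.1‖ ≤ M * Real.exp (-s * w k) := ha k.1 k.2
      _ ≤ M * Real.exp (-(s / 2) * w k) := mul_le_mul_of_nonneg_left h2 hM.le
      _ ≤ M * ((w k) ^ τ₀ * Real.exp (-(s / 2) * w k)) := by
          refine mul_le_mul_of_nonneg_left ?_ hM.le
          exact le_mul_of_one_le_left (Real.exp_pos _).le h1
      _ = M * φ (s / 2) k := rfl
  constructor
  · -- part (i)
    constructor
    · exact ⟨fun k => M / γ₀ * φ σ k, hg_summable, hbound⟩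
    · intro z hz
      have hsn : Summable (fun k : K => ‖homTerm d ω₀ a k.1 z‖) :=
        Summable.of_nonneg_of_le (fun k => norm_nonneg _) (fun k => hbound k z hz) hg_summable
      refine ⟨hsn, ?_⟩
      rw [norm_neg]
      calc ‖∑' k : K, homTerm d ω₀ a k.1 z‖ ≤ ∑' k : K, ‖homTerm d ω₀ a k.1 z‖ :=
            norm_tsum_le_tsum_norm hsn
        _ ≤ ∑' k : K, M / γ₀ * φ σ k := Summable.tsum_le_tsum (fun k => hbound k z hz) hsn hg_summable
        _ = M / γ₀ * ∑' k : K, φ σ k := tsum_mul_left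
        _ ≤ M / γ₀ * (C₀ * σ ^ (-(τ₀ + (d : ℝ)))) :=
            mul_le_mul_of_nonneg_left (hφ_tsum σ hσ) (by positivity)
        _ = C₀ * M / γ₀ * σ ^ (-(τ₀ + (d : ℝ))) := by ring
  · -- part (ii)
    intro x
    have hMφ : Summable (fun k : K => M * φ (s / 2) k) :=
      (hφ_summable (s / 2) (by linarith)).mul_left _
    have hsum_ax : Summable (fun k : K =>
        ‖a k.1 * Complex.exp (Complex.I * ∑ i, (k.1 i : ℂ) * (x i : ℂ))‖) := by
      refine Summable.of_nonneg_of_le (fun k => norm_nonneg _) (fun k => ?_) hMφ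
      rw [hnorm_ax k x]
      exact ha_le k
    refine ⟨hsum_ax, ?_⟩
    set f : K → ℝ → ℂ := fun k t =>
      homTerm d ω₀ a k.1 (fun i => ((x i : ℂ) + (t : ℂ) * (ω₀ i : ℂ))) with hfdef
    set f' : K → ℝ → ℂ := fun k t =>
      a k.1 * Complex.exp (Complex.I * ∑ i, (k.1 i : ℂ) * ((x i : ℂ) + (t : ℂ) * (ω₀ i : ℂ)))
      with hf'def
    have hg : ∀ (k : K) (t : ℝ), HasDerivAt (f k) (f' k t) t := fun k t =>
      aux_hasDerivAt_term d ω₀ a k.1 (hω_ne k) x t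
    have hf'le : ∀ (k : K) (t : ℝ), ‖f' k t‖ ≤ M * φ (s / 2) k := by
      intro k t
      have hpt : ∀ i, ((x i + t * ω₀ i : ℝ) : ℂ) = (x i : ℂ) + (t : ℂ) * (ω₀ i : ℂ) := by
        intro i; push_cast; ring
      have harg : f' k t
          = a k.1 * Complex.exp (Complex.I * ∑ i, (k.1 i : ℂ) * ((x i + t * ω₀ i : ℝ) : ℂ)) := by
        simp only [hf'def, hpt]
      rw [harg, hnorm_ax k (fun i => x i + t * ω₀ i)]
      exact ha_le k
    have hf0 : Summable fun k : K => f k 0 := by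
      apply Summable.of_norm
      refine Summable.of_nonneg_of_le (fun k => norm_nonneg _) (fun k => ?_)
        ((hφ_summable (s / 2) (by linarith)).mul_left (M / γ₀))
      refine aux_norm_homTerm d ω₀ a k.1 k.2 γ₀ τ₀ s (s / 2) M hγ0 hM (by linarith)
        (by linarith) (hdio k.1 k.2) (ha k.1 k.2) _ ?_
      intro j
      simp
      linarith
    have hDeriv := hasDerivAt_tsum hMφ hg hf'le hf0 0
    have hDerivNeg := hDeriv.neg
    convert hDerivNeg using 2
    · rfl
    · rfl
    · rfl
    refine tsum_congr ?_
    intro k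
    rw [hf'def]
    simp
end

section
/- Let d ≥ 1, τ > d − 1, 0 < γ < 1, ℓ ∈ ℕ, and let l̃ : ℝ → ℝ be C^∞ with L := sup{|l̃^{(p)}(x)| : x ∈ ℝ, 0 ≤ p ≤ ℓ} finite. Let 0 < s' < s, M > 0, and for each nonzero k ∈ ℤ^d let a_k : ℝ^d → ℂ be a C^ℓ function such that for every n with 0 ≤ n ≤ ℓ and every η ∈ ℝ^d the norm of the n-th iterated Fréchet derivative of a_k at η is at most M e^{−s|k|₁}. Then for every z ∈ ℂ^d with |Im z_j| ≤ s' for all j and every η ∈ ℝ^d the series (P_{γ,τ}f)(z,η) := ∑_{k≠0} a_k(η) e^{i⟨k,z⟩} l̃(⟨k,η⟩|k|₁^τ/γ) converges absolutely, and there exists a constant C depending only on d, τ, ℓ and L such that for every n with 0 ≤ n ≤ ℓ, the norm of the n-th iterated Fréchet derivative in η of P_{γ,τ}f is bounded on this set by C · γ^{−ℓ} · (s − s')^{−((τ+1)ℓ+d)} · M. -/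
open scoped BigOperators

/-- The `k`-th term of the series defining the cut-off operator `P_{γ,τ} f`, where
`a k η` plays the role of the Fourier coefficient `f̂(k, η)`. -/
noncomputable def cutoffTerm (d : ℕ) (τ γ : ℝ) (ltil : ℝ → ℝ)
    (a : (Fin d → ℤ) → (Fin d → ℝ) → ℂ) (k : Fin d → ℤ) (z : Fin d → ℂ)
    (η : Fin d → ℝ) : ℂ :=
  a k η * Complex.exp (Complex.I * ∑ i, (k i : ℂ) * z i) *
    ((ltil ((∑ i, (k i : ℝ) * η i) * (∑ i, |(k i : ℝ)|) ^ τ / γ) : ℝ) : ℂ)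

/-- The cut-off (flat) operator `P_{γ,τ}` applied to `f`, as a function of `(z, η)`. -/
noncomputable def cutoffOp (d : ℕ) (τ γ : ℝ) (ltil : ℝ → ℝ)
    (a : (Fin d → ℤ) → (Fin d → ℝ) → ℂ) (z : Fin d → ℂ) (η : Fin d → ℝ) : ℂ :=
  ∑' k : {k : Fin d → ℤ // k ≠ 0}, cutoffTerm d τ γ ltil a k.1 z η

set_option maxHeartbeats 1000000


/-- `t^A e^{-xt} ≤ (A/x)^A` for `x>0`, `t≥0`, `A≥0`. -/
private lemma aux_rpow_exp {A x t : ℝ} (hA : 0 ≤ A) (hx : 0 < x) (ht : 0 ≤ t) :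
    t ^ A * Real.exp (-(x * t)) ≤ (A / x) ^ A := by
  rcases eq_or_lt_of_le hA with rfl | hA'
  · simp only [Real.rpow_zero, one_mul]
    exact Real.exp_le_one_iff.2 (by nlinarith [mul_nonneg hx.le ht])
  rcases eq_or_lt_of_le ht with rfl | ht'
  · rw [Real.zero_rpow hA'.ne', zero_mul]
    positivity
  have hAx : 0 < A / x := div_pos hA' hx
  have h1 : Real.log (t / (A / x)) ≤ t / (A / x) - 1 :=
    Real.log_le_sub_one_of_pos (div_pos ht' hAx)
  have h2 : Real.log (t / (A / x)) = Real.log t - Real.log (A / x) :=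
    Real.log_div ht'.ne' hAx.ne'
  have h3 : t / (A / x) = t * x / A := by field_simp
  have key : A * Real.log t - x * t ≤ A * Real.log (A / x) := by
    have := mul_le_mul_of_nonneg_left (h1.trans_eq (by rw [h3])) hA
    rw [h2] at this
    have hAne : A ≠ 0 := hA'.ne'
    have : A * (Real.log t - Real.log (A / x)) ≤ t * x - A := by
      calc A * (Real.log t - Real.log (A / x)) ≤ A * (t * x / A - 1) := this
        _ = t * x - A := by field_simp
    nlinarith
  calc t ^ A * Real.exp (-(x * t))
      = Real.exp (A * Real.log t - x * t) := by
        rw [Real.rpow_def_of_pos ht', ← Real.exp_add]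
        ring_nf
    _ ≤ Real.exp (A * Real.log (A / x)) := Real.exp_le_exp.2 key
    _ = (A / x) ^ A := by rw [Real.rpow_def_of_pos hAx]; ring_nf

private lemma one_div_one_sub_exp_le {x : ℝ} (hx : 0 < x) :
    (1 - Real.exp (-x))⁻¹ ≤ 1 + 1 / x := by
  have hx1 : (0 : ℝ) < 1 + x := by linarith
  have h1 : Real.exp (-x) ≤ (1 + x)⁻¹ := by
    rw [Real.exp_neg]
    exact inv_anti₀ hx1 (by linarith [Real.add_one_le_exp x])
  have h2 : x / (1 + x) ≤ 1 - Real.exp (-x) := by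
    have : x / (1 + x) = 1 - (1 + x)⁻¹ := by field_simp; ring
    rw [this]; linarith
  have h3 : (0 : ℝ) < x / (1 + x) := div_pos hx hx1
  calc (1 - Real.exp (-x))⁻¹ ≤ (x / (1 + x))⁻¹ := inv_anti₀ h3 h2
    _ = (1 + x) / x := by rw [inv_div]
    _ = 1 + 1 / x := by field_simp [hx.ne']; ring


private lemma onedim_summable {x : ℝ} (hx : 0 < x) :
    Summable fun m : ℤ => Real.exp (-(x * |(m : ℝ)|)) := by
  have hr0 : (0 : ℝ) ≤ Real.exp (-x) := (Real.exp_pos _).le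
  have hr1 : Real.exp (-x) < 1 := Real.exp_lt_one_iff.2 (by linarith)
  apply Summable.of_nat_of_neg_add_one
  · refine (summable_geometric_of_lt_one hr0 hr1).congr fun n => ?_
    rw [← Real.exp_nat_mul]
    congr 1
    push_cast
    rw [abs_of_nonneg (by positivity : (0:ℝ) ≤ (n:ℝ))]
    ring
  · refine ((summable_geometric_of_lt_one hr0 hr1).mul_left (Real.exp (-x))).congr fun n => ?_
    rw [← Real.exp_nat_mul, ← Real.exp_add]
    congr 1
    push_cast
    rw [abs_of_nonpos (by push_cast; linarith [Nat.cast_nonneg (α := ℝ) n] : ((-((n:ℝ)+1)) ≤ 0))]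
    ring

private lemma onedim_tsum_le {x : ℝ} (hx : 0 < x) :
    (∑' m : ℤ, Real.exp (-(x * |(m : ℝ)|))) ≤ 2 * (1 + 1 / x) := by
  have hr0 : (0 : ℝ) ≤ Real.exp (-x) := (Real.exp_pos _).le
  have hr1 : Real.exp (-x) < 1 := Real.exp_lt_one_iff.2 (by linarith)
  have hgeo := summable_geometric_of_lt_one hr0 hr1
  have hnat : (fun n : ℕ => Real.exp (-(x * |((n : ℤ) : ℝ)|))) = fun n => Real.exp (-x) ^ n := by
    funext n
    rw [← Real.exp_nat_mul]
    congr 1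
    push_cast
    rw [abs_of_nonneg (by positivity : (0:ℝ) ≤ (n:ℝ))]
    ring
  have hneg : (fun n : ℕ => Real.exp (-(x * |((-(n+1) : ℤ) : ℝ)|)))
      = fun n => Real.exp (-x) * Real.exp (-x) ^ n := by
    funext n
    rw [← Real.exp_nat_mul, ← Real.exp_add]
    congr 1
    push_cast
    rw [abs_of_nonpos (by push_cast; linarith [Nat.cast_nonneg (α := ℝ) n] : ((-((n:ℝ)+1)) ≤ 0))]
    ring
  have h1 : Summable fun n : ℕ => Real.exp (-(x * |((n : ℤ) : ℝ)|)) := by rw [hnat]; exact hgeo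
  have h2 : Summable fun n : ℕ => Real.exp (-(x * |((-(n+1) : ℤ) : ℝ)|)) := by
    rw [hneg]; exact hgeo.mul_left _
  rw [tsum_of_nat_of_neg_add_one h1 h2]
  have hinv : (1 - Real.exp (-x))⁻¹ ≤ 1 + 1 / x := by
    have hx1 : (0 : ℝ) < 1 + x := by linarith
    have h1' : Real.exp (-x) ≤ (1 + x)⁻¹ := by
      rw [Real.exp_neg]
      exact inv_anti₀ hx1 (by linarith [Real.add_one_le_exp x])
    have h2' : x / (1 + x) ≤ 1 - Real.exp (-x) := by
      have : x / (1 + x) = 1 - (1 + x)⁻¹ := by field_simp; ring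
      rw [this]; linarith
    calc (1 - Real.exp (-x))⁻¹ ≤ (x / (1 + x))⁻¹ := inv_anti₀ (div_pos hx hx1) h2'
      _ = (1 + x) / x := by rw [inv_div]
      _ = 1 + 1 / x := by field_simp [hx.ne']; ring
  have ht1 : (∑' n : ℕ, Real.exp (-(x * |((n : ℤ) : ℝ)|))) ≤ (1 - Real.exp (-x))⁻¹ := by
    rw [hnat, tsum_geometric_of_lt_one hr0 hr1]
  have ht2 : (∑' n : ℕ, Real.exp (-(x * |((-(n+1) : ℤ) : ℝ)|))) ≤ (1 - Real.exp (-x))⁻¹ := by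
    rw [hneg, tsum_mul_left, tsum_geometric_of_lt_one hr0 hr1]
    calc Real.exp (-x) * (1 - Real.exp (-x))⁻¹ ≤ 1 * (1 - Real.exp (-x))⁻¹ := by
          apply mul_le_mul_of_nonneg_right hr1.le
          exact inv_nonneg.2 (by linarith)
      _ = (1 - Real.exp (-x))⁻¹ := one_mul _
  linarith


private lemma pisum (d : ℕ) {g : ℤ → ℝ} (hg : Summable g) (h0 : ∀ m, 0 ≤ g m) :
    Summable (fun k : Fin d → ℤ => ∏ i, g (k i)) ∧
      (∑' k : Fin d → ℤ, ∏ i, g (k i)) = (∑' m, g m) ^ d := by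
  induction d with
  | zero =>
    constructor
    · exact Summable.of_finite
    · have h : (fun k : Fin 0 → ℤ => ∏ i, g (k i)) = fun _ => (1 : ℝ) := by
        funext k; simp
      rw [h, pow_zero]
      exact tsum_eq_single (fun i => i.elim0) (fun b hb => absurd (Subsingleton.elim b _) hb)
  | succ n IH =>
    obtain ⟨hs, ht⟩ := IH
    set e := (Fin.consEquiv (fun _ : Fin (n+1) => ℤ)).symm with he
    have key : ∀ p : ℤ × (Fin n → ℤ),
        (∏ i, g (e.symm p i)) = g p.1 * ∏ i, g (p.2 i) := by
      intro p
      rw [Fin.prod_univ_succ]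
      simp [he]
    have hmul : Summable (fun p : ℤ × (Fin n → ℤ) => g p.1 * ∏ i, g (p.2 i)) :=
      Summable.mul_of_nonneg (f := g) (g := fun k : Fin n → ℤ => ∏ i, g (k i)) hg hs h0
        (fun y => Finset.prod_nonneg fun i _ => h0 _)
    have hsum : Summable (fun k : Fin (n+1) → ℤ => ∏ i, g (k i)) := by
      rw [← e.symm.summable_iff]
      exact hmul.congr fun p => (key p).symm
    refine ⟨hsum, ?_⟩
    calc (∑' k : Fin (n+1) → ℤ, ∏ i, g (k i))
        = ∑' p : ℤ × (Fin n → ℤ), ∏ i, g (e.symm p i) :=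
          (e.symm.tsum_eq (fun k => ∏ i, g (k i))).symm
      _ = ∑' p : ℤ × (Fin n → ℤ), g p.1 * ∏ i, g (p.2 i) := tsum_congr key
      _ = (∑' m, g m) * ∑' k : Fin n → ℤ, ∏ i, g (k i) := (Summable.tsum_mul_tsum hg hs hmul).symm
      _ = (∑' m, g m) ^ (n + 1) := by rw [ht, pow_succ]; ring

private lemma exp_eq_prod (d : ℕ) (x : ℝ) (k : Fin d → ℤ) :
    Real.exp (-(x * ∑ i, |(k i : ℝ)|)) = ∏ i, Real.exp (-(x * |(k i : ℝ)|)) := by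
  rw [← Real.exp_sum]
  congr 1
  rw [Finset.mul_sum, ← Finset.sum_neg_distrib]

private lemma expsum_summable (d : ℕ) {x : ℝ} (hx : 0 < x) :
    Summable (fun k : Fin d → ℤ => Real.exp (-(x * ∑ i, |(k i : ℝ)|))) := by
  have := (pisum d (onedim_summable hx) (fun m => (Real.exp_pos _).le)).1
  exact this.congr fun k => (exp_eq_prod d x k).symm

private lemma expsum_tsum_le (d : ℕ) {x : ℝ} (hx : 0 < x) :
    (∑' k : Fin d → ℤ, Real.exp (-(x * ∑ i, |(k i : ℝ)|))) ≤ (2 * (1 + 1 / x)) ^ d := by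
  have hp := pisum d (onedim_summable hx) (fun m => (Real.exp_pos _).le)
  calc (∑' k : Fin d → ℤ, Real.exp (-(x * ∑ i, |(k i : ℝ)|)))
      = ∑' k : Fin d → ℤ, ∏ i, Real.exp (-(x * |(k i : ℝ)|)) := tsum_congr (exp_eq_prod d x)
    _ = (∑' m : ℤ, Real.exp (-(x * |(m : ℝ)|))) ^ d := hp.2
    _ ≤ (2 * (1 + 1 / x)) ^ d := by
        apply pow_le_pow_left₀ (tsum_nonneg fun m => (Real.exp_pos _).le) (onedim_tsum_le hx)
private lemma one_le_l1 {d : ℕ} (k : Fin d → ℤ) (hk : k ≠ 0) : 1 ≤ ∑ i, |(k i : ℝ)| := by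
  obtain ⟨i, hi⟩ : ∃ i, k i ≠ 0 := by
    by_contra h; push_neg at h; exact hk (funext h)
  have h1 : (1 : ℝ) ≤ |(k i : ℝ)| := by
    have h2 : (1 : ℤ) ≤ |k i| := Int.one_le_abs hi
    calc (1:ℝ) = ((1:ℤ):ℝ) := by norm_num
      _ ≤ ((|k i| : ℤ) : ℝ) := by exact_mod_cast h2
      _ = |(k i : ℝ)| := by push_cast; ring
  exact h1.trans (Finset.single_le_sum (f := fun j => |(k j : ℝ)|)
    (fun j _ => abs_nonneg _) (Finset.mem_univ i))

private lemma main_sum (d : ℕ) (A : ℝ) (hA : 0 ≤ A) :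
    ∃ C : ℝ, 0 < C ∧ ∀ σ : ℝ, 0 < σ →
      Summable (fun k : {k : Fin d → ℤ // k ≠ 0} =>
        (∑ i, |(k.1 i : ℝ)|) ^ A * Real.exp (-(σ * ∑ i, |(k.1 i : ℝ)|))) ∧
      (∑' k : {k : Fin d → ℤ // k ≠ 0},
          (∑ i, |(k.1 i : ℝ)|) ^ A * Real.exp (-(σ * ∑ i, |(k.1 i : ℝ)|)))
        ≤ C * σ ^ (-(A + d)) := by
  refine ⟨((2*A) ^ A + (2*(A+d)) ^ (A+d)) * 6 ^ d + 1, by positivity, ?_⟩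
  intro σ hσ
  have hσ2 : 0 < σ / 2 := by linarith
  set N : {k : Fin d → ℤ // k ≠ 0} → ℝ := fun k => ∑ i, |(k.1 i : ℝ)| with hN
  have hN1 : ∀ k, 1 ≤ N k := fun k => one_le_l1 k.1 k.2
  have hN0 : ∀ k, 0 ≤ N k := fun k => zero_le_one.trans (hN1 k)
  have hhalf : Summable (fun k : {k : Fin d → ℤ // k ≠ 0} => Real.exp (-(σ/2 * N k))) :=
    (expsum_summable d hσ2).subtype _
  have hsplit : ∀ k, Real.exp (-(σ * N k))
      = Real.exp (-(σ/2 * N k)) * Real.exp (-(σ/2 * N k)) := by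
    intro k; rw [← Real.exp_add]; congr 1; ring
  have hptA : ∀ k, N k ^ A * Real.exp (-(σ * N k))
      ≤ (2*A/σ) ^ A * Real.exp (-(σ/2 * N k)) := by
    intro k
    rw [hsplit k, ← mul_assoc]
    apply mul_le_mul_of_nonneg_right _ (Real.exp_pos _).le
    calc N k ^ A * Real.exp (-(σ/2 * N k)) ≤ (A / (σ/2)) ^ A := aux_rpow_exp hA hσ2 (hN0 k)
      _ = (2*A/σ) ^ A := by congr 1; field_simp
  have hnn : ∀ k, 0 ≤ N k ^ A * Real.exp (-(σ * N k)) := by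
    intro k; positivity
  have hsum : Summable (fun k : {k : Fin d → ℤ // k ≠ 0} =>
      N k ^ A * Real.exp (-(σ * N k))) := by
    apply Summable.of_nonneg_of_le hnn hptA
    exact hhalf.mul_left _
  refine ⟨hsum, ?_⟩
  have htsub : (∑' k : {k : Fin d → ℤ // k ≠ 0}, Real.exp (-(σ/2 * N k)))
      ≤ (2 + 4/σ) ^ d := by
    have h1 : (∑' k : {k : Fin d → ℤ // k ≠ 0}, Real.exp (-(σ/2 * N k)))
        ≤ ∑' k : Fin d → ℤ, Real.exp (-(σ/2 * ∑ i, |(k i : ℝ)|)) := by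
      exact Summable.tsum_le_tsum_of_inj
        (f := fun k : {k : Fin d → ℤ // k ≠ 0} => Real.exp (-(σ/2 * N k)))
        (g := fun k : Fin d → ℤ => Real.exp (-(σ/2 * ∑ i, |(k i : ℝ)|)))
        (Subtype.val) Subtype.coe_injective
        (fun c _ => (Real.exp_pos _).le) (fun k => le_rfl) hhalf (expsum_summable d hσ2)
    have h2 := expsum_tsum_le d hσ2
    have h3 : (2 * (1 + 1/(σ/2)))^d = (2 + 4/σ)^d := by
      congr 1; field_simp; ring
    rw [h3] at h2
    exact h1.trans h2
  have hexp0 : (0:ℝ) < σ ^ (-(A + d)) := Real.rpow_pos_of_pos hσ _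
  have hQ : (0:ℝ) ≤ (2*A) ^ A := Real.rpow_nonneg (by linarith) _
  have hP : (0:ℝ) ≤ (2*(A+d)) ^ (A+d) := Real.rpow_nonneg (by positivity) _
  have hS : (0:ℝ) < (6:ℝ) ^ d := pow_pos (by norm_num) d
  rcases le_or_gt σ 1 with hσ1 | hσ1
  · -- small σ
    have h6 : (2 + 4/σ : ℝ) ≤ 6/σ := by
      have h1σ : (1:ℝ) ≤ 1/σ := one_le_one_div hσ hσ1
      have h2' : (2:ℝ) ≤ 2/σ := by
        calc (2:ℝ) = 2 * 1 := by ring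
          _ ≤ 2 * (1/σ) := by linarith
          _ = 2/σ := by ring
      calc (2:ℝ) + 4/σ ≤ 2/σ + 4/σ := by linarith
        _ = 6/σ := by ring
    have e1 : (2*A/σ) ^ A = (2*A) ^ A * σ ^ (-A) := by
      rw [Real.div_rpow (by linarith) hσ.le, Real.rpow_neg hσ.le, div_eq_mul_inv]
    have e3 : ((6:ℝ)/σ) ^ d = 6 ^ d * σ ^ (-(d:ℝ)) := by
      rw [div_pow, Real.rpow_neg hσ.le, Real.rpow_natCast, div_eq_mul_inv]
    have e4 : σ ^ (-A) * σ ^ (-(d:ℝ)) = σ ^ (-(A+d)) := by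
      rw [← Real.rpow_add hσ]; congr 1; ring
    have hcA : (0:ℝ) ≤ (2*A/σ) ^ A := Real.rpow_nonneg (by positivity) _
    calc (∑' k, N k ^ A * Real.exp (-(σ * N k)))
        ≤ ∑' k, (2*A/σ) ^ A * Real.exp (-(σ/2 * N k)) :=
          Summable.tsum_le_tsum hptA hsum (hhalf.mul_left _)
      _ = (2*A/σ) ^ A * ∑' k : {k : Fin d → ℤ // k ≠ 0}, Real.exp (-(σ/2 * N k)) :=
          tsum_mul_left
      _ ≤ (2*A/σ) ^ A * (2 + 4/σ) ^ d := by gcongr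
      _ ≤ (2*A/σ) ^ A * (6/σ) ^ d :=
          mul_le_mul_of_nonneg_left (pow_le_pow_left₀ (by positivity) h6 d) hcA
      _ = (2*A) ^ A * 6 ^ d * (σ ^ (-A) * σ ^ (-(d:ℝ))) := by rw [e1, e3]; ring
      _ = (2*A) ^ A * 6 ^ d * σ ^ (-(A+d)) := by rw [e4]
      _ ≤ (((2*A) ^ A + (2*(A+d)) ^ (A+d)) * 6 ^ d + 1) * σ ^ (-(A + d)) := by
          apply mul_le_mul_of_nonneg_right _ hexp0.le
          nlinarith
  · -- large σ
    have hd0 : (0:ℝ) ≤ (d:ℝ) := Nat.cast_nonneg d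
    have hAd : (0:ℝ) ≤ A + d := by linarith
    have hpt2 : ∀ k, N k ^ A * Real.exp (-(σ * N k))
        ≤ (2*(A+d)) ^ (A+d) * σ ^ (-(A+d)) * Real.exp (-(σ/2 * N k)) := by
      intro k
      have step1 : N k ^ A ≤ N k ^ (A + (d:ℝ)) :=
        Real.rpow_le_rpow_of_exponent_le (hN1 k) (by linarith)
      have step2 : N k ^ (A + (d:ℝ)) * Real.exp (-(σ/2 * N k)) ≤ ((A+d) / (σ/2)) ^ (A+(d:ℝ)) :=
        aux_rpow_exp hAd hσ2 (hN0 k)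
      have e5 : ((A+d) / (σ/2) : ℝ) ^ (A+(d:ℝ)) = (2*(A+d)) ^ (A+d) * σ ^ (-(A+d)) := by
        have h7 : ((A+d) / (σ/2) : ℝ) = (2*(A+d)) / σ := by field_simp
        rw [h7, Real.div_rpow (by positivity) hσ.le, Real.rpow_neg hσ.le, div_eq_mul_inv]
      calc N k ^ A * Real.exp (-(σ * N k))
          = N k ^ A * Real.exp (-(σ/2 * N k)) * Real.exp (-(σ/2 * N k)) := by
            rw [hsplit k]; ring
        _ ≤ N k ^ (A+(d:ℝ)) * Real.exp (-(σ/2 * N k)) * Real.exp (-(σ/2 * N k)) := by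
            have := mul_le_mul_of_nonneg_right step1 (Real.exp_pos (-(σ/2 * N k))).le
            exact mul_le_mul_of_nonneg_right this (Real.exp_pos _).le
        _ ≤ ((A+d) / (σ/2)) ^ (A+(d:ℝ)) * Real.exp (-(σ/2 * N k)) :=
            mul_le_mul_of_nonneg_right step2 (Real.exp_pos _).le
        _ = (2*(A+d)) ^ (A+d) * σ ^ (-(A+d)) * Real.exp (-(σ/2 * N k)) := by rw [e5]
    have h6 : ((2:ℝ) + 4/σ) ^ d ≤ 6 ^ d := by
      apply pow_le_pow_left₀ (by positivity)
      have : (4:ℝ)/σ ≤ 4 := by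
        rw [div_le_iff₀ hσ]; nlinarith
      linarith
    calc (∑' k, N k ^ A * Real.exp (-(σ * N k)))
        ≤ ∑' k, (2*(A+d)) ^ (A+d) * σ ^ (-(A+d)) * Real.exp (-(σ/2 * N k)) :=
          Summable.tsum_le_tsum hpt2 hsum (hhalf.mul_left _)
      _ = (2*(A+d)) ^ (A+d) * σ ^ (-(A+d))
            * ∑' k : {k : Fin d → ℤ // k ≠ 0}, Real.exp (-(σ/2 * N k)) := tsum_mul_left
      _ ≤ (2*(A+d)) ^ (A+d) * σ ^ (-(A+d)) * (2 + 4/σ) ^ d := by gcongr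
      _ ≤ (2*(A+d)) ^ (A+d) * σ ^ (-(A+d)) * 6 ^ d := by
          apply mul_le_mul_of_nonneg_left h6 (by positivity)
      _ = (2*(A+d)) ^ (A+d) * 6 ^ d * σ ^ (-(A+d)) := by ring
      _ ≤ (((2*A) ^ A + (2*(A+d)) ^ (A+d)) * 6 ^ d + 1) * σ ^ (-(A + d)) := by
          apply mul_le_mul_of_nonneg_right _ hexp0.le
          nlinarith

/-- The continuous linear functional `η ↦ ∑ i, c i * η i` on `Fin d → ℝ`. -/
private noncomputable def linf (d : ℕ) (c : Fin d → ℝ) : (Fin d → ℝ) →L[ℝ] ℝ :=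
  ∑ i, c i • ContinuousLinearMap.proj i

private lemma linf_apply (d : ℕ) (c : Fin d → ℝ) (η : Fin d → ℝ) :
    linf d c η = ∑ i, c i * η i := by
  simp [linf]

private lemma norm_linf_le (d : ℕ) (c : Fin d → ℝ) : ‖linf d c‖ ≤ ∑ i, |c i| := by
  apply ContinuousLinearMap.opNorm_le_bound _ (Finset.sum_nonneg fun i _ => abs_nonneg _)
  intro x
  rw [linf_apply, Real.norm_eq_abs]
  calc |∑ i, c i * x i| ≤ ∑ i, |c i * x i| := Finset.abs_sum_le_sum_abs _ _
    _ = ∑ i, |c i| * |x i| := by simp [abs_mul]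
    _ ≤ ∑ i, |c i| * ‖x‖ := Finset.sum_le_sum fun i _ =>
        mul_le_mul_of_nonneg_left ((Real.norm_eq_abs (x i)) ▸ norm_le_pi_norm x i) (abs_nonneg _)
    _ = (∑ i, |c i|) * ‖x‖ := by rw [Finset.sum_mul]

private lemma comp_lin_bound {d : ℕ} (ltil : ℝ → ℝ) {ℓ : ℕ} (hsm : ContDiff ℝ (⊤ : ℕ∞) ltil)
    {L : ℝ} (hL : ∀ p ≤ ℓ, ∀ x : ℝ, |iteratedDeriv p ltil x| ≤ L)
    (ψ : (Fin d → ℝ) →L[ℝ] ℝ) (m : ℕ) (hm : m ≤ ℓ) (η : Fin d → ℝ) :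
    ‖iteratedFDeriv ℝ m (fun y => ((ltil (ψ y) : ℝ) : ℂ)) η‖ ≤ L * ‖ψ‖ ^ m := by
  have hlt : ContDiff ℝ ((ℓ : ℕ∞) : WithTop ℕ∞) ltil := hsm.of_le (by exact_mod_cast le_top)
  have hcomp : ContDiff ℝ ((ℓ : ℕ∞) : WithTop ℕ∞) (fun y => ltil (ψ y)) :=
    hlt.comp ψ.contDiff
  have hm' : (m : WithTop ℕ∞) ≤ ((ℓ : ℕ∞) : WithTop ℕ∞) := by exact_mod_cast hm
  have h1 : ‖iteratedFDeriv ℝ m (fun y => ((ltil (ψ y) : ℝ) : ℂ)) η‖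
      = ‖iteratedFDeriv ℝ m (fun y => ltil (ψ y)) η‖ :=
    Complex.ofRealLI.norm_iteratedFDeriv_comp_left hcomp.contDiffAt hm'
  have h2 : iteratedFDeriv ℝ m (fun y => ltil (ψ y)) η
      = (iteratedFDeriv ℝ m ltil (ψ η)).compContinuousLinearMap fun _ => ψ :=
    ψ.iteratedFDeriv_comp_right hlt η hm'
  rw [h1, h2]
  calc ‖(iteratedFDeriv ℝ m ltil (ψ η)).compContinuousLinearMap fun _ => ψ‖
      ≤ ‖iteratedFDeriv ℝ m ltil (ψ η)‖ * ∏ _i : Fin m, ‖ψ‖ :=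
        ContinuousMultilinearMap.norm_compContinuousLinearMap_le _ _
    _ = ‖iteratedFDeriv ℝ m ltil (ψ η)‖ * ‖ψ‖ ^ m := by
        rw [Finset.prod_const, Finset.card_univ, Fintype.card_fin]
    _ ≤ L * ‖ψ‖ ^ m := by
        apply mul_le_mul_of_nonneg_right _ (pow_nonneg (norm_nonneg _) m)
        rw [norm_iteratedFDeriv_eq_norm_iteratedDeriv, Real.norm_eq_abs]
        exact hL m hm _

private lemma expfactor_bound {d : ℕ} (k : Fin d → ℤ) (z : Fin d → ℂ) (s' : ℝ)
    (hz : ∀ j, |(z j).im| ≤ s') :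
    ‖Complex.exp (Complex.I * ∑ i, (k i : ℂ) * z i)‖ ≤ Real.exp (s' * ∑ i, |(k i : ℝ)|) := by
  rw [Complex.norm_exp]
  apply Real.exp_le_exp.2
  have him : (∑ i, (k i : ℂ) * z i).im = ∑ i, (k i : ℝ) * (z i).im := by
    rw [Complex.im_sum]
    congr 1; funext i
    simp [Complex.mul_im]
  have hre : (Complex.I * ∑ i, (k i : ℂ) * z i).re = -(∑ i, (k i : ℝ) * (z i).im) := by
    rw [Complex.mul_re, Complex.I_re, Complex.I_im, him]; ring
  rw [hre]
  calc -(∑ i, (k i : ℝ) * (z i).im) ≤ |∑ i, (k i : ℝ) * (z i).im| :=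
        neg_le_abs _
    _ ≤ ∑ i, |(k i : ℝ) * (z i).im| := Finset.abs_sum_le_sum_abs _ _
    _ ≤ ∑ i, |(k i : ℝ)| * s' := Finset.sum_le_sum fun i _ => by
        rw [abs_mul]
        exact mul_le_mul_of_nonneg_left (hz i) (abs_nonneg _)
    _ = s' * ∑ i, |(k i : ℝ)| := by rw [Finset.mul_sum]; congr 1; funext i; ring
section Term

variable {d : ℕ} {τ γ : ℝ} {ltil : ℝ → ℝ} {ℓ : ℕ}
  {a : (Fin d → ℤ) → (Fin d → ℝ) → ℂ} {k : Fin d → ℤ} {z : Fin d → ℂ}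

/-- Representation of the term as a product of `a`, a constant, and a linear composition. -/
private lemma term_rep (hγ : γ ≠ 0) :
    (fun η => cutoffTerm d τ γ ltil a k z η) =
      (fun η => a k η * (Complex.exp (Complex.I * ∑ i, (k i : ℂ) * z i) *
        ((ltil (linf d (fun i => (k i : ℝ) * ((∑ j, |(k j : ℝ)|) ^ τ / γ)) η) : ℝ) : ℂ))) := by
  funext η
  have harg : (∑ i, (k i : ℝ) * η i) * (∑ i, |(k i : ℝ)|) ^ τ / γ
      = linf d (fun i => (k i : ℝ) * ((∑ j, |(k j : ℝ)|) ^ τ / γ)) η := by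
    rw [linf_apply, div_eq_mul_inv, Finset.sum_mul, Finset.sum_mul]
    exact Finset.sum_congr rfl fun i _ => by ring
  rw [cutoffTerm, harg, mul_assoc]

private lemma term_contDiff (hsm : ContDiff ℝ (⊤ : ℕ∞) ltil) (hγ : γ ≠ 0)
    (ha : ContDiff ℝ (ℓ : ℕ∞) (a k)) :
    ContDiff ℝ (ℓ : ℕ∞) (fun η => cutoffTerm d τ γ ltil a k z η) := by
  rw [term_rep hγ]
  apply ha.mul
  apply contDiff_const.mul
  exact Complex.ofRealCLM.contDiff.comp ((hsm.of_le (by exact_mod_cast le_top)).comp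
    (linf d _).contDiff)

private lemma term_bound
    (hsm : ContDiff ℝ (⊤ : ℕ∞) ltil) {L : ℝ}
    (hL : ∀ p ≤ ℓ, ∀ x : ℝ, |iteratedDeriv p ltil x| ≤ L)
    (hτ : 0 ≤ τ)
    (hγ0 : 0 < γ) (hγ1 : γ < 1)
    {s' s M : ℝ} (hs'0 : 0 < s') (hss : s' < s) (hM : 0 < M)
    (ha : ContDiff ℝ (ℓ : ℕ∞) (a k))
    (hab : ∀ n ≤ ℓ, ∀ η : Fin d → ℝ,
      ‖iteratedFDeriv ℝ n (a k) η‖ ≤ M * Real.exp (-s * ∑ i, |(k i : ℝ)|))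
    (hk : k ≠ 0)
    (hz : ∀ j, |(z j).im| ≤ s')
    {n : ℕ} (hn : n ≤ ℓ) (η : Fin d → ℝ) :
    ‖iteratedFDeriv ℝ n (fun η => cutoffTerm d τ γ ltil a k z η) η‖ ≤
      2 ^ ℓ * (L + 1) * M * (γ ^ ℓ)⁻¹ *
        ((∑ i, |(k i : ℝ)|) ^ ((τ + 1) * (ℓ : ℝ)) *
          Real.exp (-((s - s') * ∑ i, |(k i : ℝ)|))) := by
  have hL0 : 0 ≤ L := (abs_nonneg _).trans (hL 0 (Nat.zero_le _) 0)
  set N : ℝ := ∑ i, |(k i : ℝ)| with hNdef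
  have hN1 : 1 ≤ N := one_le_l1 k hk
  have hN0 : 0 < N := lt_of_lt_of_le one_pos hN1
  set c : Fin d → ℝ := fun i => (k i : ℝ) * (N ^ τ / γ) with hc
  set ψ : (Fin d → ℝ) →L[ℝ] ℝ := linf d c with hψ
  set E : ℂ := Complex.exp (Complex.I * ∑ i, (k i : ℂ) * z i) with hE
  set g : (Fin d → ℝ) → ℂ := fun y => ((ltil (ψ y) : ℝ) : ℂ) with hg
  -- norm of ψ
  have hψn : ‖ψ‖ ≤ N ^ (τ + 1) / γ := by
    refine (norm_linf_le d c).trans ?_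
    have : ∀ i, |c i| = |(k i : ℝ)| * (N ^ τ / γ) := by
      intro i
      rw [hc, abs_mul, abs_of_nonneg (by positivity : (0:ℝ) ≤ N ^ τ / γ)]
    calc (∑ i, |c i|) = (∑ i, |(k i : ℝ)|) * (N ^ τ / γ) := by
          rw [Finset.sum_mul]; exact Finset.sum_congr rfl fun i _ => this i
      _ = N ^ (τ + 1) / γ := by
          rw [Real.rpow_add_one hN0.ne']; ring
      _ ≤ N ^ (τ + 1) / γ := le_rfl
  have hbase1 : 1 ≤ N ^ (τ + 1) / γ := by
    have h1 : 1 ≤ N ^ (τ + 1) := Real.one_le_rpow hN1 (by linarith)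
    rw [le_div_iff₀ hγ0]
    nlinarith
  -- bound on iterated derivatives of g
  have hgQ : ∀ m, m ≤ ℓ → ∀ y, ‖iteratedFDeriv ℝ m g y‖
      ≤ (L + 1) * (N ^ ((τ + 1) * (ℓ : ℝ)) * (γ ^ ℓ)⁻¹) := by
    intro m hm y
    have h1 : ‖iteratedFDeriv ℝ m g y‖ ≤ L * ‖ψ‖ ^ m := comp_lin_bound ltil hsm hL ψ m hm y
    have h2 : ‖ψ‖ ^ m ≤ (N ^ (τ + 1) / γ) ^ m :=
      pow_le_pow_left₀ (norm_nonneg _) hψn m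
    have h3 : (N ^ (τ + 1) / γ) ^ m ≤ (N ^ (τ + 1) / γ) ^ ℓ :=
      pow_le_pow_right₀ hbase1 hm
    have h4 : (N ^ (τ + 1) / γ) ^ ℓ = N ^ ((τ + 1) * (ℓ : ℝ)) * (γ ^ ℓ)⁻¹ := by
      rw [div_pow, ← Real.rpow_natCast (N ^ (τ + 1)) ℓ, ← Real.rpow_mul hN0.le,
        div_eq_mul_inv]
    calc ‖iteratedFDeriv ℝ m g y‖ ≤ L * ‖ψ‖ ^ m := h1
      _ ≤ L * (N ^ (τ + 1) / γ) ^ ℓ := by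
          apply mul_le_mul_of_nonneg_left (h2.trans h3) hL0
      _ ≤ (L + 1) * (N ^ (τ + 1) / γ) ^ ℓ := by
          apply mul_le_mul_of_nonneg_right (by linarith) (by positivity)
      _ = (L + 1) * (N ^ ((τ + 1) * (ℓ : ℝ)) * (γ ^ ℓ)⁻¹) := by rw [h4]
  have hgsm : ContDiff ℝ ((ℓ : ℕ∞) : WithTop ℕ∞) g :=
    Complex.ofRealCLM.contDiff.comp ((hsm.of_le (by exact_mod_cast le_top)).comp ψ.contDiff)
  -- bound on E
  have hEb : ‖E‖ ≤ Real.exp (s' * N) := expfactor_bound k z s' hz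
  -- rewrite the term
  have hrep : (fun η => cutoffTerm d τ γ ltil a k z η) = fun η => a k η * (E * g η) :=
    term_rep hγ0.ne'
  rw [hrep]
  have hn' : (n : WithTop ℕ∞) ≤ ((ℓ : ℕ∞) : WithTop ℕ∞) := by exact_mod_cast hn
  have hEg : ContDiff ℝ ((ℓ : ℕ∞) : WithTop ℕ∞) (fun y => E * g y) := contDiff_const.mul hgsm
  have hmain := norm_iteratedFDeriv_mul_le (𝕜 := ℝ) ha hEg η hn'
  -- bound each summand
  set X : ℝ := M * Real.exp (-s * N) with hX
  set Y : ℝ := Real.exp (s' * N) * ((L + 1) * (N ^ ((τ + 1) * (ℓ : ℝ)) * (γ ^ ℓ)⁻¹)) with hY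
  have hsummand : ∀ j ∈ Finset.range (n + 1),
      (n.choose j : ℝ) * ‖iteratedFDeriv ℝ j (a k) η‖ *
        ‖iteratedFDeriv ℝ (n - j) (fun y => E * g y) η‖
      ≤ (n.choose j : ℝ) * (X * Y) := by
    intro j hj
    have hjℓ : j ≤ ℓ := le_trans (Nat.lt_succ_iff.1 (Finset.mem_range.1 hj)) hn
    have hja : ‖iteratedFDeriv ℝ j (a k) η‖ ≤ X := hab j hjℓ η
    have hsmul : (fun y => E * g y) = fun y => E • g y := rfl
    have hnj : n - j ≤ ℓ := le_trans (Nat.sub_le n j) hn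
    have hnj' : ((n - j : ℕ) : WithTop ℕ∞) ≤ ((ℓ : ℕ∞) : WithTop ℕ∞) := by
      exact Nat.cast_le.2 hnj
    have hEgd : ‖iteratedFDeriv ℝ (n - j) (fun y => E * g y) η‖ ≤ Y := by
      rw [hsmul, iteratedFDeriv_const_smul_apply' (hgsm.of_le hnj').contDiffAt]
      refine (norm_smul_le E (iteratedFDeriv ℝ (n - j) g η)).trans ?_
      rw [hY]
      exact mul_le_mul hEb (hgQ (n - j) hnj η) (norm_nonneg _) (Real.exp_pos _).le
    calc (n.choose j : ℝ) * ‖iteratedFDeriv ℝ j (a k) η‖ *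
          ‖iteratedFDeriv ℝ (n - j) (fun y => E * g y) η‖
        ≤ (n.choose j : ℝ) * X * ‖iteratedFDeriv ℝ (n - j) (fun y => E * g y) η‖ := by
          apply mul_le_mul_of_nonneg_right _ (norm_nonneg _)
          exact mul_le_mul_of_nonneg_left hja (Nat.cast_nonneg _)
      _ ≤ (n.choose j : ℝ) * X * Y := by
          apply mul_le_mul_of_nonneg_left hEgd
          exact mul_nonneg (Nat.cast_nonneg _) (by rw [hX]; positivity)
      _ = (n.choose j : ℝ) * (X * Y) := by ring
  have hXY : 0 ≤ X * Y := by
    rw [hX, hY]; positivity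
  calc ‖iteratedFDeriv ℝ n (fun η => a k η * (E * g η)) η‖
      ≤ ∑ j ∈ Finset.range (n + 1), (n.choose j : ℝ) * ‖iteratedFDeriv ℝ j (a k) η‖ *
          ‖iteratedFDeriv ℝ (n - j) (fun y => E * g y) η‖ := hmain
    _ ≤ ∑ j ∈ Finset.range (n + 1), (n.choose j : ℝ) * (X * Y) :=
        Finset.sum_le_sum hsummand
    _ = (2 : ℝ) ^ n * (X * Y) := by
        rw [← Finset.sum_mul]
        congr 1
        rw [← Nat.cast_sum, Nat.sum_range_choose]
        push_cast; ring
    _ ≤ (2 : ℝ) ^ ℓ * (X * Y) := by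
        apply mul_le_mul_of_nonneg_right _ hXY
        exact pow_le_pow_right₀ one_le_two hn
    _ = 2 ^ ℓ * (L + 1) * M * (γ ^ ℓ)⁻¹ *
        (N ^ ((τ + 1) * (ℓ : ℝ)) * Real.exp (-((s - s') * N))) := by
        rw [hX, hY]
        rw [show Real.exp (-((s - s') * N)) = Real.exp (-s * N) * Real.exp (s' * N) by
          rw [← Real.exp_add]; congr 1; ring]
        ring

end Term

/-- Lemma 3.2 of the paper. The series defining `P_{γ,τ} f` converges
absolutely on the strip `|Im z_j| ≤ s'`, and its iterated Fréchet derivatives in `η` of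
order `n ≤ ℓ` are bounded by `C γ^{-ℓ} (s-s')^{-((τ+1)ℓ+d)} M`, with `C` depending only
on `d`, `τ`, `ℓ` and `L`. -/
theorem stmt_5 (d : ℕ) (hd : 1 ≤ d) (τ : ℝ) (hτ : (d : ℝ) - 1 < τ) (ℓ : ℕ)
    (ltil : ℝ → ℝ) (hsm : ContDiff ℝ (⊤ : ℕ∞) ltil) (L : ℝ)
    (hL : ∀ p ≤ ℓ, ∀ x : ℝ, |iteratedDeriv p ltil x| ≤ L) :
    ∃ C : ℝ, 0 < C ∧
      ∀ γ : ℝ, 0 < γ → γ < 1 →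
      ∀ s' s M : ℝ, 0 < s' → s' < s → 0 < M →
      ∀ a : (Fin d → ℤ) → (Fin d → ℝ) → ℂ,
        (∀ k : Fin d → ℤ, k ≠ 0 → ContDiff ℝ (ℓ : ℕ∞) (a k)) →
        (∀ k : Fin d → ℤ, k ≠ 0 → ∀ n ≤ ℓ, ∀ η : Fin d → ℝ,
          ‖iteratedFDeriv ℝ n (a k) η‖ ≤ M * Real.exp (-s * ∑ i, |(k i : ℝ)|)) →
        (∀ z : Fin d → ℂ, (∀ j, |(z j).im| ≤ s') → ∀ η : Fin d → ℝ,
          Summable (fun k : {k : Fin d → ℤ // k ≠ 0} =>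
            ‖cutoffTerm d τ γ ltil a k.1 z η‖)) ∧
        (∀ n ≤ ℓ, ∀ z : Fin d → ℂ, (∀ j, |(z j).im| ≤ s') → ∀ η : Fin d → ℝ,
          ‖iteratedFDeriv ℝ n (cutoffOp d τ γ ltil a z) η‖
            ≤ C * γ ^ (-(ℓ : ℝ)) * (s - s') ^ (-((τ + 1) * (ℓ : ℝ) + (d : ℝ))) * M) := by
  have hd1 : (1 : ℝ) ≤ d := by exact_mod_cast hd
  have hτ0 : 0 ≤ τ := by linarith
  set A : ℝ := (τ + 1) * (ℓ : ℝ) with hA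
  have hA0 : 0 ≤ A := by positivity
  obtain ⟨C₁, hC₁, hC₁b⟩ := main_sum d A hA0
  have hL0 : 0 ≤ L := (abs_nonneg _).trans (hL 0 (Nat.zero_le _) 0)
  refine ⟨2 ^ ℓ * (L + 1) * C₁, by positivity, ?_⟩
  intro γ hγ0 hγ1 s' s M hs'0 hss hM a hacd habd
  have hσ : 0 < s - s' := by linarith
  obtain ⟨hsumA, htsumA⟩ := hC₁b (s - s') hσ
  set v : {k : Fin d → ℤ // k ≠ 0} → ℝ := fun k =>
    2 ^ ℓ * (L + 1) * M * (γ ^ ℓ)⁻¹ *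
      ((∑ i, |(k.1 i : ℝ)|) ^ A * Real.exp (-((s - s') * ∑ i, |(k.1 i : ℝ)|))) with hv
  have hvsum : Summable v := hsumA.mul_left _
  have hbound : ∀ (m : ℕ), m ≤ ℓ → ∀ (k : {k : Fin d → ℤ // k ≠ 0}),
      ∀ z : Fin d → ℂ, (∀ j, |(z j).im| ≤ s') → ∀ η : Fin d → ℝ,
      ‖iteratedFDeriv ℝ m (fun η => cutoffTerm d τ γ ltil a k.1 z η) η‖ ≤ v k := by
    intro m hm k z hz η
    exact term_bound hsm hL hτ0 hγ0 hγ1 hs'0 hss hM (hacd k.1 k.2)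
      (fun n hn η => habd k.1 k.2 n hn η) k.2 hz hm η
  constructor
  · -- summability of the series of norms
    intro z hz η
    apply Summable.of_nonneg_of_le (fun k => norm_nonneg _) _ hvsum
    intro k
    calc ‖cutoffTerm d τ γ ltil a k.1 z η‖
        = ‖iteratedFDeriv ℝ 0 (fun η => cutoffTerm d τ γ ltil a k.1 z η) η‖ :=
          (norm_iteratedFDeriv_zero).symm
      _ ≤ v k := hbound 0 (Nat.zero_le _) k z hz η
  · -- bound on the iterated derivatives
    intro n hn z hz η
    have hfeq : cutoffOp d τ γ ltil a z
        = fun η => ∑' k : {k : Fin d → ℤ // k ≠ 0}, cutoffTerm d τ γ ltil a k.1 z η := rfl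
    have hder := iteratedFDeriv_tsum_apply (𝕜 := ℝ) (N := (ℓ : ℕ∞))
      (f := fun (k : {k : Fin d → ℤ // k ≠ 0}) η => cutoffTerm d τ γ ltil a k.1 z η)
      (v := fun _ k => v k)
      (fun k => term_contDiff hsm hγ0.ne' (hacd k.1 k.2))
      (fun m _ => hvsum)
      (fun m k x hm => hbound m (by exact_mod_cast hm) k z hz x)
      (by exact_mod_cast hn) η
    rw [hfeq, hder]
    have hnorms : Summable (fun k : {k : Fin d → ℤ // k ≠ 0} =>
        ‖iteratedFDeriv ℝ n (fun η => cutoffTerm d τ γ ltil a k.1 z η) η‖) :=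
      Summable.of_nonneg_of_le (fun k => norm_nonneg _)
        (fun k => hbound n hn k z hz η) hvsum
    have hders : Summable (fun k : {k : Fin d → ℤ // k ≠ 0} =>
        iteratedFDeriv ℝ n (fun η => cutoffTerm d τ γ ltil a k.1 z η) η) :=
      hnorms.of_norm
    have hγℓ : γ ^ (-(ℓ : ℝ)) = (γ ^ ℓ)⁻¹ := by
      rw [Real.rpow_neg hγ0.le, Real.rpow_natCast]
    calc ‖∑' k : {k : Fin d → ℤ // k ≠ 0},
            iteratedFDeriv ℝ n (fun η => cutoffTerm d τ γ ltil a k.1 z η) η‖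
        ≤ ∑' k : {k : Fin d → ℤ // k ≠ 0},
            ‖iteratedFDeriv ℝ n (fun η => cutoffTerm d τ γ ltil a k.1 z η) η‖ :=
          norm_tsum_le_tsum_norm hnorms
      _ ≤ ∑' k, v k := Summable.tsum_le_tsum (fun k => hbound n hn k z hz η) hnorms hvsum
      _ = 2 ^ ℓ * (L + 1) * M * (γ ^ ℓ)⁻¹ *
            ∑' k : {k : Fin d → ℤ // k ≠ 0},
              ((∑ i, |(k.1 i : ℝ)|) ^ A * Real.exp (-((s - s') * ∑ i, |(k.1 i : ℝ)|))) :=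
          tsum_mul_left
      _ ≤ 2 ^ ℓ * (L + 1) * M * (γ ^ ℓ)⁻¹ * (C₁ * (s - s') ^ (-(A + d))) := by
          apply mul_le_mul_of_nonneg_left htsumA (by positivity)
      _ = 2 ^ ℓ * (L + 1) * C₁ * γ ^ (-(ℓ : ℝ)) * (s - s') ^ (-(A + (d : ℝ))) * M := by
          rw [hγℓ]; ring
end

section
/- Let d ≥ 1 and let ω₀ ∈ ℝ^d be nonzero. For each integer j ≥ 1 let P_j : ℝ^d → ℝ^d be a map each of whose components is a homogeneous polynomial of degree j, and set P_0(ξ) = ω₀ for all ξ. Assume the nondegeneracy condition: for every nonzero γ ∈ ℝ^d there exists j ≥ 0 such that the polynomial ξ ↦ ⟨γ, P_j(ξ)⟩ is not identically zero on ℝ^d. Then there exist p ∈ ℕ and σ > 0 such that for every unit vector e ∈ ℝ^d there exists a unit vector u ∈ ℝ^d with max_{0 ≤ j ≤ p} j! · |⟨e, P_j(u)⟩| ≥ σ. -/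
open scoped BigOperators

lemma eval_homog_smul {d n : ℕ} {φ : MvPolynomial (Fin d) ℝ} (h : φ.IsHomogeneous n)
    (r : ℝ) (x : Fin d → ℝ) :
    MvPolynomial.eval (fun i => r * x i) φ = r ^ n * MvPolynomial.eval x φ := by
  rw [MvPolynomial.eval_eq, MvPolynomial.eval_eq, Finset.mul_sum]
  apply Finset.sum_congr rfl
  intro m hm
  have hc : MvPolynomial.coeff m φ ≠ 0 := MvPolynomial.mem_support_iff.mp hm
  have hw := h hc
  have hsupp : ∑ i ∈ m.support, m i = ∑ i, m i :=
    (Finset.sum_subset (Finset.subset_univ _) (by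
      intro i _ hi; exact Finsupp.notMem_support_iff.mp hi))
  have hsum : ∑ i ∈ m.support, m i = n := by
    rw [← hw, Finsupp.weight_apply, Finsupp.sum]
    simp
  rw [Finset.prod_congr rfl (fun i _ => mul_pow r (x i) (m i)), Finset.prod_mul_distrib,
    Finset.prod_pow_eq_pow_sum, hsupp, ← hsupp, hsum]
  ring

/-- Lemma 7.3 of the paper. If `P_j` are the homogeneous components
of degree `j` of the Birkhoff normal form frequency map, `P_0 ≡ ω₀ ≠ 0`, and the normal
form is `0`-degenerate (no nonzero `γ` with `⟨γ, P_j⟩ ≡ 0` for all `j`), then there are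
`p ∈ ℕ` and `σ > 0` such that for every (Euclidean) unit vector `e` there is a unit
vector `u` with `max_{0 ≤ j ≤ p} j! |⟨e, P_j(u)⟩| ≥ σ`. -/
theorem stmt_12 (d : ℕ) (hd : 1 ≤ d) (ω₀ : Fin d → ℝ) (hω : ω₀ ≠ 0)
    (Q : ℕ → Fin d → MvPolynomial (Fin d) ℝ)
    (hhom : ∀ j i, (Q j i).IsHomogeneous j)
    (hQ0 : ∀ (x : Fin d → ℝ) (i : Fin d), MvPolynomial.eval x (Q 0 i) = ω₀ i)
    (hnd : ∀ γ : Fin d → ℝ, γ ≠ 0 →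
      ∃ (j : ℕ) (x : Fin d → ℝ), (∑ i, γ i * MvPolynomial.eval x (Q j i)) ≠ 0) :
    ∃ (p : ℕ) (σ : ℝ), 0 < σ ∧
      ∀ e : Fin d → ℝ, (∑ i, e i ^ 2) = 1 →
        ∃ u : Fin d → ℝ, (∑ i, u i ^ 2) = 1 ∧
          ∃ j ≤ p, σ ≤ (Nat.factorial j : ℝ) * |∑ i, e i * MvPolynomial.eval u (Q j i)| := by
  classical
  set S : Set (Fin d → ℝ) := {e | (∑ i, e i ^ 2) = 1} with hS
  -- S is compact
  have hScomp : IsCompact S := by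
    have hclosed : IsClosed S := by
      have : Continuous fun e : Fin d → ℝ => ∑ i, e i ^ 2 := by
        continuity
      exact isClosed_eq this continuous_const
    have hbdd : S ⊆ Metric.closedBall 0 1 := by
      intro e he
      rw [Metric.mem_closedBall, dist_zero_right, pi_norm_le_iff_of_nonneg zero_le_one]
      intro i
      rw [Real.norm_eq_abs, abs_le]
      have h1 : e i ^ 2 ≤ ∑ k, e k ^ 2 :=
        Finset.single_le_sum (fun k _ => sq_nonneg (e k)) (Finset.mem_univ i)
      rw [he] at h1
      constructor <;> nlinarith [sq_nonneg (e i)]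
    exact (isCompact_closedBall (0 : Fin d → ℝ) 1).of_isClosed_subset hclosed hbdd
  -- For each e in S, find j and unit u with nonzero pairing
  have key : ∀ e ∈ S, ∃ (j : ℕ) (u : Fin d → ℝ), (∑ i, u i ^ 2) = 1 ∧
      (∑ i, e i * MvPolynomial.eval u (Q j i)) ≠ 0 := by
    intro e he
    have hene : e ≠ 0 := by
      intro h0
      rw [h0] at he
      simp [hS] at he
    obtain ⟨j, x, hx⟩ := hnd e hene
    rcases eq_or_ne j 0 with rfl | hj
    · refine ⟨0, e, he, ?_⟩
      have : ∀ i, MvPolynomial.eval e (Q 0 i) = MvPolynomial.eval x (Q 0 i) := by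
        intro i; rw [hQ0, hQ0]
      rw [Finset.sum_congr rfl fun i _ => by rw [this i]]
      exact hx
    · -- x ≠ 0 since j ≥ 1
      have hxne : (∑ i, x i ^ 2) ≠ 0 := by
        intro h0
        have hx0 : x = 0 := by
          funext i
          have := (Finset.sum_eq_zero_iff_of_nonneg
            (fun k _ => sq_nonneg (x k))).mp h0 i (Finset.mem_univ i)
          exact pow_eq_zero_iff (n := 2) (by norm_num) |>.mp this
        apply hx
        rw [hx0]
        apply Finset.sum_eq_zero
        intro i _
        have : MvPolynomial.eval (fun k => (0:ℝ) * (0:Fin d → ℝ) k) (Q j i)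
            = 0 ^ j * MvPolynomial.eval (0 : Fin d → ℝ) (Q j i) :=
          eval_homog_smul (hhom j i) 0 0
        simp only [zero_mul] at this
        have h0j : (0:ℝ) ^ j = 0 := zero_pow hj
        rw [show (fun k : Fin d => (0:ℝ)) = (0 : Fin d → ℝ) from rfl] at this
        rw [this, h0j, zero_mul, mul_zero]
      have hxpos : (0:ℝ) < ∑ i, x i ^ 2 :=
        lt_of_le_of_ne (Finset.sum_nonneg fun k _ => sq_nonneg (x k)) (Ne.symm hxne)
      set r : ℝ := (Real.sqrt (∑ i, x i ^ 2))⁻¹ with hr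
      have hsq : Real.sqrt (∑ i, x i ^ 2) > 0 := Real.sqrt_pos.mpr hxpos
      have hrpos : 0 < r := inv_pos.mpr hsq
      refine ⟨j, fun i => r * x i, ?_, ?_⟩
      · have : ∑ i, (r * x i) ^ 2 = r ^ 2 * ∑ i, x i ^ 2 := by
          rw [Finset.mul_sum]; apply Finset.sum_congr rfl; intro i _; ring
        rw [this, hr, ← Real.sqrt_inv, Real.sq_sqrt (by positivity),
          inv_mul_cancel₀ hxne]
      · have heval : ∀ i, MvPolynomial.eval (fun k => r * x k) (Q j i)
            = r ^ j * MvPolynomial.eval x (Q j i) := fun i => eval_homog_smul (hhom j i) r x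
        rw [Finset.sum_congr rfl fun i _ => by rw [heval i]]
        have : ∑ i, e i * (r ^ j * MvPolynomial.eval x (Q j i))
            = r ^ j * ∑ i, e i * MvPolynomial.eval x (Q j i) := by
          rw [Finset.mul_sum]; apply Finset.sum_congr rfl; intro i _; ring
        rw [this]
        exact mul_ne_zero (pow_ne_zero j (ne_of_gt hrpos)) hx
  -- choose the data
  choose jf uf huf hval using key
  -- value function
  set c : (e : Fin d → ℝ) → e ∈ S → ℝ := fun e he =>
    (Nat.factorial (jf e he) : ℝ) * |∑ i, e i * MvPolynomial.eval (uf e he) (Q (jf e he) i)|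
    with hc
  have hcpos : ∀ e (he : e ∈ S), 0 < c e he := by
    intro e he
    exact mul_pos (by positivity) (abs_pos.mpr (hval e he))
  -- open cover
  set V : S → Set (Fin d → ℝ) := fun e =>
    {e' | c e.1 e.2 / 2 < (Nat.factorial (jf e.1 e.2) : ℝ) *
      |∑ i, e' i * MvPolynomial.eval (uf e.1 e.2) (Q (jf e.1 e.2) i)|} with hV
  have hVopen : ∀ e : S, IsOpen (V e) := by
    intro e
    apply isOpen_lt continuous_const
    apply Continuous.mul continuous_const
    apply Continuous.abs
    apply continuous_finset_sum
    intro i _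
    exact (continuous_apply i).mul continuous_const
  have hcover : S ⊆ ⋃ e : S, V e := by
    intro e he
    refine Set.mem_iUnion.mpr ⟨⟨e, he⟩, ?_⟩
    simp only [hV, Set.mem_setOf_eq]
    exact half_lt_self (hcpos e he)
  obtain ⟨t, ht⟩ := hScomp.elim_finite_subcover V hVopen hcover
  -- t nonempty: S is nonempty
  have hSne : S.Nonempty := by
    refine ⟨fun i => if i = ⟨0, hd⟩ then 1 else 0, ?_⟩
    simp only [hS, Set.mem_setOf_eq]
    rw [Finset.sum_eq_single ⟨0, hd⟩]
    · simp
    · intro i _ hi; simp [hi]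
    · intro h; exact absurd (Finset.mem_univ _) h
  obtain ⟨e0, he0⟩ := hSne
  have hte : t.Nonempty := by
    rcases Set.mem_iUnion₂.mp (ht he0) with ⟨i, hi, _⟩
    exact ⟨i, hi⟩
  refine ⟨t.sup (fun e => jf e.1 e.2), t.inf' hte (fun e => c e.1 e.2 / 2), ?_, ?_⟩
  · rw [Finset.lt_inf'_iff]
    intro e _
    exact half_pos (hcpos e.1 e.2)
  · intro e he
    rcases Set.mem_iUnion₂.mp (ht he) with ⟨w, hw, hew⟩
    simp only [hV, Set.mem_setOf_eq] at hew
    refine ⟨uf w.1 w.2, huf w.1 w.2, jf w.1 w.2, Finset.le_sup (f := fun e : S => jf e.1 e.2) hw, ?_⟩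
    calc t.inf' hte (fun e => c e.1 e.2 / 2) ≤ c w.1 w.2 / 2 := Finset.inf'_le _ hw
      _ ≤ _ := le_of_lt hew
end

section
/- Let l̃ : ℝ → ℝ be a C^∞ function with |l̃| ≤ 1 and l̃(x) = 1 whenever |x| ≤ 1/4; let ℓ ∈ ℕ and L := sup{|l̃^{(p)}(x)| : x ∈ ℝ, 0 ≤ p ≤ ℓ}, assumed finite. Let d ≥ 1, τ > 0, 0 < γ < 1, and let k ∈ ℤ^d be nonzero. Define ψ_k : ℝ^d → ℝ by ψ_k(η) = (1 − l̃(⟨k,η⟩|k|₁^τ/γ))/⟨k,η⟩ if ⟨k,η⟩ ≠ 0, and ψ_k(η) = 0 if ⟨k,η⟩ = 0. Then ψ_k is C^∞ on all of ℝ^d, and there exists a constant C depending only on ℓ and L such that for every n with 0 ≤ n ≤ ℓ and every η ∈ ℝ^d, the norm of the n-th iterated Fréchet derivative of ψ_k at η is at most C · |k|₁^{(τ+1)n+τ} · γ^{−(n+1)}. -/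
open scoped BigOperators

/-- The small-divisor function `ψ_k(η) = (1 - l̃(⟨k,η⟩|k|₁^τ/γ))/⟨k,η⟩` (extended by `0`
across the hyperplane `⟨k,η⟩ = 0`). -/
noncomputable def smallDivisor (d : ℕ) (τ γ : ℝ) (ltil : ℝ → ℝ) (k : Fin d → ℤ)
    (η : Fin d → ℝ) : ℝ :=
  if (∑ i, (k i : ℝ) * η i) = 0 then 0
  else (1 - ltil ((∑ i, (k i : ℝ) * η i) * (∑ i, |(k i : ℝ)|) ^ τ / γ)) /
    (∑ i, (k i : ℝ) * η i)

private lemma iteratedFDeriv_congr_open {f g : ℝ → ℝ} {s : Set ℝ} (hs : IsOpen s)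
    (h : Set.EqOn f g s) {x : ℝ} (hx : x ∈ s) (n : ℕ) :
    iteratedFDeriv ℝ n f x = iteratedFDeriv ℝ n g x :=
  ((iteratedFDerivWithin_of_isOpen n hs hx).symm.trans
    (iteratedFDerivWithin_congr h hx n)).trans (iteratedFDerivWithin_of_isOpen n hs hx)

private lemma aux_inv_bound (m : ℕ) (t : ℝ) (ht : 1/4 ≤ |t|) :
    ‖iteratedFDeriv ℝ m (fun s : ℝ => s⁻¹) t‖ ≤ (m.factorial : ℝ) * 4 ^ (m + 1) := by
  have ht0 : (0 : ℝ) < |t| := lt_of_lt_of_le (by norm_num) ht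
  rw [norm_iteratedFDeriv_eq_norm_iteratedDeriv]
  have hfun : (fun s : ℝ => s⁻¹) = (Inv.inv : ℝ → ℝ) := rfl
  rw [hfun, iteratedDeriv_eq_iterate, iter_deriv_inv, Real.norm_eq_abs, abs_mul]
  have h1 : |∏ i ∈ Finset.range m, ((-1 : ℝ) - i)| = (m.factorial : ℝ) := by
    rw [Finset.abs_prod]
    have h2 : ∀ i ∈ Finset.range m, |(-1 : ℝ) - (i : ℕ)| = ((i + 1 : ℕ) : ℝ) := by
      intro i _
      have hi : ((-1 : ℝ) - (i : ℕ)) ≤ 0 := by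
        have : (0 : ℝ) ≤ (i : ℕ) := Nat.cast_nonneg i
        linarith
      rw [abs_of_nonpos hi]; push_cast; ring
    rw [Finset.prod_congr rfl h2, ← Nat.cast_prod,
      Finset.prod_range_add_one_eq_factorial]
  rw [abs_mul, abs_pow, abs_neg, abs_one, one_pow, one_mul, Nat.abs_cast]
  have hexp : t ^ (-1 - (m : ℤ)) = (t ^ (m + 1))⁻¹ := by
    rw [show (-1 - (m : ℤ)) = -((m + 1 : ℕ) : ℤ) by push_cast; ring, zpow_neg, zpow_natCast]
  rw [hexp, abs_inv, abs_pow]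
  have h4 : ((4 : ℝ) ^ (m + 1))⁻¹ ≤ |t| ^ (m + 1) := by
    rw [← inv_pow]
    exact pow_le_pow_left₀ (by norm_num) (by linarith : (4 : ℝ)⁻¹ ≤ |t|) _
  have h3 : (|t| ^ (m + 1))⁻¹ ≤ 4 ^ (m + 1) := by
    have := inv_anti₀ (by positivity : (0:ℝ) < ((4:ℝ) ^ (m+1))⁻¹) h4
    rwa [inv_inv] at this
  exact mul_le_mul_of_nonneg_left h3 (by positivity)

/-- estimate (5.11) of the paper. For a smooth cut-off `l̃` with
`|l̃| ≤ 1`, `l̃ = 1` on `[-1/4, 1/4]`, and derivatives of order `≤ ℓ` bounded by `L`,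
the function `ψ_k` is `C^∞` and there is `C > 0` depending only on `ℓ` and `L` with
`‖D^n ψ_k(η)‖ ≤ C |k|₁^{(τ+1)n+τ} γ^{-(n+1)}` for all `n ≤ ℓ`. -/
theorem stmt_13 (ℓ : ℕ) (L : ℝ) :
    ∃ C : ℝ, 0 < C ∧
      ∀ ltil : ℝ → ℝ, ContDiff ℝ (⊤ : ℕ∞) ltil →
        (∀ x : ℝ, |ltil x| ≤ 1) →
        (∀ x : ℝ, |x| ≤ 1 / 4 → ltil x = 1) →
        (∀ p ≤ ℓ, ∀ x : ℝ, |iteratedDeriv p ltil x| ≤ L) →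
      ∀ d : ℕ, 1 ≤ d → ∀ τ γ : ℝ, 0 < τ → 0 < γ → γ < 1 →
      ∀ k : Fin d → ℤ, k ≠ 0 →
        ContDiff ℝ (⊤ : ℕ∞) (smallDivisor d τ γ ltil k) ∧
        ∀ n ≤ ℓ, ∀ η : Fin d → ℝ,
          ‖iteratedFDeriv ℝ n (smallDivisor d τ γ ltil k) η‖
            ≤ C * (∑ i, |(k i : ℝ)|) ^ ((τ + 1) * (n : ℝ) + τ) * γ ^ (-((n : ℝ) + 1)) := by
  classical
  set B : ℕ → ℝ := fun m => ∑ i ∈ Finset.range (m + 1),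
    (m.choose i : ℝ) * (2 + |L|) * (((m - i).factorial : ℝ) * 4 ^ (m - i + 1)) with hB
  have hBnonneg : ∀ m, 0 ≤ B m := by
    intro m
    apply Finset.sum_nonneg
    intro i _
    positivity
  have hsumnn : 0 ≤ ∑ m ∈ Finset.range (ℓ + 1), B m :=
    Finset.sum_nonneg fun m _ => hBnonneg m
  refine ⟨1 + ∑ m ∈ Finset.range (ℓ + 1), B m, by linarith, ?_⟩
  set C : ℝ := 1 + ∑ m ∈ Finset.range (ℓ + 1), B m with hCdef
  have hCnonneg : (0 : ℝ) ≤ C := by simp only [hCdef]; linarith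
  intro ltil hsm hbd1 hflat hder d hd τ γ hτ hγ hγ1 k hk
  -- basic setup
  set K : ℝ := ∑ i, |(k i : ℝ)| with hKdef
  have hK1 : (1 : ℝ) ≤ K := by
    obtain ⟨i0, hi0⟩ : ∃ i, k i ≠ 0 := by
      by_contra h
      push_neg at h
      exact hk (funext h)
    have h1 : (1 : ℝ) ≤ |(k i0 : ℝ)| := by
      have h2 : (1 : ℤ) ≤ |k i0| := Int.one_le_abs hi0
      calc (1 : ℝ) ≤ ((|k i0| : ℤ) : ℝ) := by exact_mod_cast h2
        _ = |(k i0 : ℝ)| := by push_cast; ring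
    calc (1 : ℝ) ≤ |(k i0 : ℝ)| := h1
      _ ≤ K := Finset.single_le_sum (f := fun i => |(k i : ℝ)|)
          (fun i _ => abs_nonneg _) (Finset.mem_univ i0)
  have hKpos : (0 : ℝ) < K := lt_of_lt_of_le one_pos hK1
  set c : ℝ := K ^ τ / γ with hcdef
  have hcpos : (0 : ℝ) < c := div_pos (Real.rpow_pos_of_pos hKpos τ) hγ
  -- the one-dimensional cut function φ
  set φ : ℝ → ℝ := fun t => if t = 0 then 0 else (1 - ltil t) / t with hφdef
  have hφ0 : Set.EqOn φ (fun _ => (0:ℝ)) {s : ℝ | |s| < 1/4} := by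
    intro s hs
    by_cases h : s = 0
    · simp [hφdef, h]
    · simp only [hφdef, if_neg h]
      rw [hflat s (le_of_lt hs), sub_self, zero_div]
  have hVopen : IsOpen {s : ℝ | |s| < 1/4} := isOpen_lt continuous_abs continuous_const
  have hUopen : IsOpen {s : ℝ | s ≠ 0} := isOpen_compl_singleton
  have hφU : Set.EqOn φ (fun s => (1 - ltil s) * s⁻¹) {s : ℝ | s ≠ 0} := by
    intro s hs
    simp only [hφdef, if_neg hs, div_eq_mul_inv]
  have htop : ∀ i : ℕ, (i : WithTop ℕ∞) ≤ ((⊤ : ℕ∞) : WithTop ℕ∞) := by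
    intro i
    exact_mod_cast le_top
  -- smoothness of φ
  have hφsm : ContDiff ℝ (⊤ : ℕ∞) φ := by
    rw [contDiff_iff_contDiffAt]
    intro t
    by_cases h : |t| < 1/4
    · exact (contDiffAt_const (c := (0 : ℝ))).congr_of_eventuallyEq
        (Filter.eventuallyEq_of_mem (hVopen.mem_nhds h) hφ0)
    · have ht0 : t ≠ 0 := by
        intro h0
        apply h
        rw [h0]; norm_num
      have hCA : ContDiffAt ℝ (⊤ : ℕ∞) (fun s => (1 - ltil s) * s⁻¹) t :=
        ((contDiff_const.sub hsm).contDiffAt).mul (contDiffAt_inv ℝ ht0)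
      exact hCA.congr_of_eventuallyEq
        (Filter.eventuallyEq_of_mem (hUopen.mem_nhds ht0) hφU)
  -- bound on derivatives of φ
  have hφbound : ∀ n ≤ ℓ, ∀ t : ℝ, ‖iteratedFDeriv ℝ n φ t‖ ≤ C := by
    intro n hn t
    by_cases h : |t| < 1/4
    · rw [iteratedFDeriv_congr_open hVopen hφ0 h n]
      simp only [iteratedFDeriv_zero_fun, Pi.zero_apply, norm_zero]
      exact hCnonneg
    · have ht4 : 1/4 ≤ |t| := not_lt.1 h
      have ht0 : t ≠ 0 := by
        intro h0
        rw [h0] at ht4; norm_num at ht4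
      have hmem : t ∈ {s : ℝ | s ≠ 0} := ht0
      have heq : iteratedFDeriv ℝ n φ t =
          iteratedFDerivWithin ℝ n (fun s => (1 - ltil s) * s⁻¹) {s : ℝ | s ≠ 0} t :=
        (iteratedFDerivWithin_of_isOpen (f := φ) n hUopen hmem).symm.trans
          (iteratedFDerivWithin_congr hφU hmem n)
      rw [heq]
      have hu : ContDiffOn ℝ ((⊤ : ℕ∞) : WithTop ℕ∞) (fun s : ℝ => 1 - ltil s)
          {s : ℝ | s ≠ 0} := (contDiff_const.sub hsm).contDiffOn
      have hg : ContDiffOn ℝ ((⊤ : ℕ∞) : WithTop ℕ∞) (fun s : ℝ => s⁻¹)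
          {s : ℝ | s ≠ 0} := fun s hs => (contDiffAt_inv ℝ hs).contDiffWithinAt
      refine le_trans (norm_iteratedFDerivWithin_mul_le hu hg hUopen.uniqueDiffOn hmem
        (htop n)) ?_
      have hterm : ∀ i ∈ Finset.range (n + 1),
          (n.choose i : ℝ) * ‖iteratedFDerivWithin ℝ i (fun s : ℝ => 1 - ltil s)
              {s : ℝ | s ≠ 0} t‖ *
            ‖iteratedFDerivWithin ℝ (n - i) (fun s : ℝ => s⁻¹) {s : ℝ | s ≠ 0} t‖
          ≤ (n.choose i : ℝ) * (2 + |L|) * (((n - i).factorial : ℝ) * 4 ^ (n - i + 1)) := by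
        intro i hi
        have e1 : iteratedFDerivWithin ℝ i (fun s : ℝ => 1 - ltil s) {s : ℝ | s ≠ 0} t
            = iteratedFDeriv ℝ i (fun s : ℝ => 1 - ltil s) t :=
          iteratedFDerivWithin_of_isOpen (f := fun s : ℝ => 1 - ltil s) i hUopen hmem
        have e2 : iteratedFDerivWithin ℝ (n - i) (fun s : ℝ => s⁻¹) {s : ℝ | s ≠ 0} t
            = iteratedFDeriv ℝ (n - i) (fun s : ℝ => s⁻¹) t :=
          iteratedFDerivWithin_of_isOpen (f := fun s : ℝ => s⁻¹) (n - i) hUopen hmem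
        rw [e1, e2]
        have hfact1 : ‖iteratedFDeriv ℝ i (fun s : ℝ => 1 - ltil s) t‖ ≤ 2 + |L| := by
          by_cases h0 : i = 0
          · subst h0
            rw [norm_iteratedFDeriv_zero]
            have hb := hbd1 t
            have h2 : ‖1 - ltil t‖ ≤ 2 := by
              rw [Real.norm_eq_abs]
              calc |1 - ltil t| ≤ |(1:ℝ)| + |ltil t| := abs_sub _ _
                _ ≤ 1 + 1 := by simp only [abs_one]; linarith
                _ = 2 := by norm_num
            have : (0:ℝ) ≤ |L| := abs_nonneg L
            linarith
          · have hfr : (fun s : ℝ => 1 - ltil s) = (fun _ : ℝ => (1:ℝ)) + fun s => -ltil s := by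
              funext s; simp [sub_eq_add_neg]
            have hadd : iteratedFDeriv ℝ i ((fun _ : ℝ => (1:ℝ)) + fun s => -ltil s) t
                = iteratedFDeriv ℝ i (fun _ : ℝ => (1:ℝ)) t
                  + iteratedFDeriv ℝ i (fun s => -ltil s) t :=
              iteratedFDeriv_add_apply ((contDiff_const (c := (1:ℝ))).of_le (htop i)).contDiffAt
                ((hsm.neg).of_le (htop i)).contDiffAt
            have hconst : iteratedFDeriv ℝ i (fun _ : ℝ => (1:ℝ)) t = 0 := by
              rw [iteratedFDeriv_const_of_ne h0]; rfl
            have hneg : (fun s : ℝ => -ltil s) = -ltil := rfl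
            rw [hfr, hadd, hconst, hneg, iteratedFDeriv_neg_apply]
            simp only [zero_add, norm_neg]
            rw [norm_iteratedFDeriv_eq_norm_iteratedDeriv, Real.norm_eq_abs]
            have h4 := hder i (le_trans (Nat.lt_succ_iff.mp (Finset.mem_range.mp hi)) hn) t
            have h5 : L ≤ |L| := le_abs_self L
            linarith
        have hfact2 : ‖iteratedFDeriv ℝ (n - i) (fun s : ℝ => s⁻¹) t‖
            ≤ ((n - i).factorial : ℝ) * 4 ^ (n - i + 1) := aux_inv_bound (n - i) t ht4
        refine mul_le_mul (mul_le_mul le_rfl hfact1 (norm_nonneg _) (by positivity))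
          hfact2 (norm_nonneg _) (by positivity)
      calc (∑ i ∈ Finset.range (n + 1),
            (n.choose i : ℝ) * ‖iteratedFDerivWithin ℝ i (fun s : ℝ => 1 - ltil s)
              {s : ℝ | s ≠ 0} t‖ *
            ‖iteratedFDerivWithin ℝ (n - i) (fun s : ℝ => s⁻¹) {s : ℝ | s ≠ 0} t‖)
          ≤ B n := Finset.sum_le_sum hterm
        _ ≤ ∑ m ∈ Finset.range (ℓ + 1), B m :=
            Finset.single_le_sum (fun m _ => hBnonneg m)
              (Finset.mem_range.mpr (Nat.lt_succ_of_le hn))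
        _ ≤ C := by simp only [hCdef]; linarith
  -- the linear map
  set lk : (Fin d → ℝ) →L[ℝ] ℝ :=
    c • (∑ i, (k i : ℝ) • (ContinuousLinearMap.proj i : (Fin d → ℝ) →L[ℝ] ℝ)) with hlkdef
  have hlkapp : ∀ η : Fin d → ℝ, lk η = c * ∑ i, (k i : ℝ) * η i := by
    intro η
    simp [hlkdef, ContinuousLinearMap.sum_apply, ContinuousLinearMap.smul_apply,
      ContinuousLinearMap.proj_apply, smul_eq_mul, Finset.mul_sum]
  have hlknorm : ‖lk‖ ≤ c * K := by
    apply ContinuousLinearMap.opNorm_le_bound _ (by positivity)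
    intro η
    rw [hlkapp η, Real.norm_eq_abs, abs_mul, abs_of_pos hcpos, mul_assoc]
    apply mul_le_mul_of_nonneg_left _ (le_of_lt hcpos)
    calc |∑ i, (k i : ℝ) * η i| ≤ ∑ i, |(k i : ℝ) * η i| := Finset.abs_sum_le_sum_abs _ _
      _ ≤ ∑ i, |(k i : ℝ)| * ‖η‖ := by
          apply Finset.sum_le_sum
          intro i _
          rw [abs_mul]
          exact mul_le_mul_of_nonneg_left (le_trans (le_of_eq (Real.norm_eq_abs _).symm)
            (norm_le_pi_norm η i)) (abs_nonneg _)
      _ = K * ‖η‖ := by rw [← Finset.sum_mul]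
  -- identification of smallDivisor
  have hψ : smallDivisor d τ γ ltil k = fun η => c • (φ ∘ lk) η := by
    funext η
    simp only [Function.comp_apply, smul_eq_mul, hlkapp η]
    by_cases h : (∑ i, (k i : ℝ) * η i) = 0
    · simp [smallDivisor, h, hφdef]
    · have hct : c * (∑ i, (k i : ℝ) * η i) ≠ 0 := mul_ne_zero (ne_of_gt hcpos) h
      simp only [smallDivisor, if_neg h, hφdef, if_neg hct]
      have harg : c * (∑ i, (k i : ℝ) * η i) = (∑ i, (k i : ℝ) * η i) * K ^ τ / γ := by
        rw [hcdef]; ring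
      rw [harg]
      rw [← harg]
      field_simp
  have hψsm : ContDiff ℝ (⊤ : ℕ∞) (smallDivisor d τ γ ltil k) := by
    rw [hψ]
    exact (hφsm.comp lk.contDiff).const_smul c
  refine ⟨hψsm, ?_⟩
  intro n hn η
  rw [hψ]
  have hcomp : ContDiff ℝ ((⊤ : ℕ∞) : WithTop ℕ∞) (φ ∘ lk) := hφsm.comp lk.contDiff
  rw [iteratedFDeriv_const_smul_apply' (hcomp.of_le (htop n)).contDiffAt]
  rw [norm_smul c (iteratedFDeriv ℝ n (φ ∘ lk) η), Real.norm_eq_abs, abs_of_pos hcpos]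
  rw [ContinuousLinearMap.iteratedFDeriv_comp_right lk hφsm η (htop n)]
  have hnorm1 : ‖(iteratedFDeriv ℝ n φ (lk η)).compContinuousLinearMap fun _ => lk‖
      ≤ C * (c * K) ^ n := by
    refine le_trans (ContinuousMultilinearMap.norm_compContinuousLinearMap_le _ _) ?_
    rw [Finset.prod_const, Finset.card_univ, Fintype.card_fin]
    have h1 := hφbound n hn (lk η)
    have h2 : ‖lk‖ ^ n ≤ (c * K) ^ n :=
      pow_le_pow_left₀ (norm_nonneg _) hlknorm n
    exact mul_le_mul h1 h2 (pow_nonneg (norm_nonneg _) n) hCnonneg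
  calc c * ‖(iteratedFDeriv ℝ n φ (lk η)).compContinuousLinearMap fun _ => lk‖
      ≤ c * (C * (c * K) ^ n) := mul_le_mul_of_nonneg_left hnorm1 (le_of_lt hcpos)
    _ = C * (c ^ (n + 1) * K ^ n) := by ring
    _ = C * (K ^ ((τ + 1) * (n : ℝ) + τ) * γ ^ (-((n : ℝ) + 1))) := by
        congr 1
        have e1 : c ^ (n + 1) = K ^ (τ * ((n : ℝ) + 1)) * γ ^ (-((n : ℝ) + 1)) := by
          rw [hcdef, div_pow, ← Real.rpow_natCast (K ^ τ) (n+1), ← Real.rpow_mul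
            (le_of_lt hKpos), ← Real.rpow_natCast γ (n+1),
            div_eq_mul_inv, ← Real.rpow_neg (le_of_lt hγ)]
          push_cast
          ring_nf
        rw [e1, ← Real.rpow_natCast K n]
        rw [show K ^ (τ * ((n : ℝ) + 1)) * γ ^ (-((n : ℝ) + 1)) * K ^ (n : ℝ)
            = K ^ (τ * ((n : ℝ) + 1)) * K ^ (n : ℝ) * γ ^ (-((n : ℝ) + 1)) by ring,
          ← Real.rpow_add hKpos]
        congr 2
        ring
    _ = C * K ^ ((τ + 1) * (n : ℝ) + τ) * γ ^ (-((n : ℝ) + 1)) := by ring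
end
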